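/- arXiv:2007.15834 — 4 statements merged into one kernel-verified Lean document; each statement's English description precedes it below -/
import Mathlib

section
/- Let γ > 0 and 0 < c₀ ≤ C₀. There exist γ′ > γ and R > e such that for every sequence (a_k)_{k≥1} of reals with a_1 ≥ R and c₀·a_k·(log a_k)^γ ≤ a_{k+1} ≤ C₀·a_k·(log a_k)^γ for all k ≥ 1, there exist constants 0 < c ≤ C with c·n^{γn} ≤ a_n ≤ C·n^{γ′n} for all n ≥ 1. -/
set_option maxHeartbeats 1600000


/-- For `γ > 0` and `0 < c₀ ≤ C₀` there exist `γ' > γ` and `R > e` such that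
any sequence with `a 1 ≥ R` and `c₀·a_k·(log a_k)^γ ≤ a_{k+1} ≤ C₀·a_k·(log a_k)^γ`
satisfies `c·n^(γn) ≤ a_n ≤ C·n^(γ'n)` for some `0 < c ≤ C` and all `n ≥ 1`. -/
theorem stmt_9 (γ c₀ C₀ : ℝ) (hγ : 0 < γ) (hc₀ : 0 < c₀) (hc₀C₀ : c₀ ≤ C₀) :
    ∃ γ' : ℝ, γ < γ' ∧ ∃ R : ℝ, Real.exp 1 < R ∧
      ∀ a : ℕ → ℝ, R ≤ a 1 →
        (∀ k ≥ 1, c₀ * a k * Real.log (a k) ^ γ ≤ a (k + 1) ∧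
                  a (k + 1) ≤ C₀ * a k * Real.log (a k) ^ γ) →
        ∃ c C : ℝ, 0 < c ∧ c ≤ C ∧
          ∀ n : ℕ, 1 ≤ n →
            c * (n : ℝ) ^ (γ * n) ≤ a n ∧ a n ≤ C * (n : ℝ) ^ (γ' * n) := by
  have hC₀ : 0 < C₀ := hc₀.trans_le hc₀C₀
  set B : ℝ := 1 + |Real.log c₀| / γ with hB
  have hB1 : 1 ≤ B := le_add_of_nonneg_right (by positivity)
  have hγB : γ * B = γ + |Real.log c₀| := by
    rw [hB, mul_add, mul_one, mul_div_assoc', mul_div_cancel_left₀ _ hγ.ne']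
  set A : ℝ := 2 * Real.exp B with hA
  set D : ℝ := A * Real.exp (A / γ) with hD
  have heB : Real.exp 1 ≤ Real.exp B := Real.exp_le_exp.mpr hB1
  have he2 : (2:ℝ) ≤ Real.exp 1 := by linarith [Real.add_one_le_exp 1]
  have heB2 : (2:ℝ) ≤ Real.exp B := le_trans he2 heB
  have hexpA : (1:ℝ) ≤ Real.exp (A / γ) := by
    rw [← Real.exp_zero]
    apply Real.exp_le_exp.mpr
    positivity
  have hD4 : (4:ℝ) ≤ D := by
    rw [hD, hA]; nlinarith
  -- Key property of D
  have hDkey : ∀ k : ℕ, 1 ≤ k → Real.exp B * ((k:ℝ) + 1) ≤ γ * k * Real.log k + D := by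
    intro k hk
    have hk1 : (1:ℝ) ≤ (k:ℝ) := by exact_mod_cast hk
    rcases le_or_gt (A / γ) (Real.log k) with h | h
    · have hAk : A ≤ γ * Real.log k := (div_le_iff₀ hγ).mp h |>.trans_eq (mul_comm _ _)
      have h2 : A * k ≤ γ * k * Real.log k := by nlinarith
      have hD0 : (0:ℝ) ≤ D := by linarith
      have h1 : Real.exp B * ((k:ℝ) + 1) ≤ A * k := by
        rw [hA]; nlinarith [Real.exp_pos B]
      linarith
    · have hkA : (k:ℝ) ≤ Real.exp (A / γ) := by
        calc (k:ℝ) = Real.exp (Real.log k) := (Real.exp_log (by linarith)).symm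
        _ ≤ Real.exp (A / γ) := Real.exp_le_exp.mpr h.le
      have hlog : 0 ≤ γ * k * Real.log k := by
        have := Real.log_nonneg hk1; positivity
      have h1 : Real.exp B * ((k:ℝ) + 1) ≤ D := by
        rw [hD, hA]; nlinarith [Real.exp_pos B]
      linarith
  refine ⟨3 * γ, by linarith, Real.exp D, Real.exp_lt_exp.mpr (by linarith), ?_⟩
  intro a ha hrec
  set E : ℝ := Real.log (a 1) with hE
  set B' : ℝ := Real.log (3 * γ + 1) + |Real.log C₀| / γ with hB'
  set m : ℝ := E + Real.exp B' + 3 with hm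
  have hRpos : 0 < a 1 := lt_of_lt_of_le (Real.exp_pos D) ha
  have hED : D ≤ E := by
    rw [hE]
    calc D = Real.log (Real.exp D) := (Real.log_exp D).symm
    _ ≤ Real.log (a 1) := Real.log_le_log (Real.exp_pos D) ha
  have hE0 : 0 < E := by linarith
  have hm3 : 3 ≤ m := by
    have := Real.exp_pos B'; rw [hm]; linarith
  have hmE : E ≤ m := by
    have := Real.exp_pos B'; rw [hm]; linarith
  have hmB' : Real.exp B' ≤ m := by rw [hm]; linarith
  have hγB' : γ * B' = γ * Real.log (3 * γ + 1) + |Real.log C₀| := by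
    rw [hB', mul_add, mul_div_assoc', mul_div_cancel_left₀ _ hγ.ne']
  -- Main induction
  have key : ∀ k : ℕ, 1 ≤ k → 0 < a k ∧ γ * k * Real.log k + D ≤ Real.log (a k) ∧
      Real.log (a k) ≤ 3 * γ * k * Real.log ((k:ℝ) + m) + E := by
    intro k hk
    induction k, hk using Nat.le_induction with
    | base =>
      refine ⟨hRpos, ?_, ?_⟩
      · simp only [Nat.cast_one, Real.log_one, mul_one, mul_zero, zero_add]
        exact hED
      · have h1 : 0 ≤ Real.log (1 + m) := Real.log_nonneg (by linarith)
        have : (0:ℝ) ≤ 3 * γ * 1 * Real.log ((1:ℝ) + m) := by positivity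
        simp only [Nat.cast_one]
        linarith [le_refl E]
    | succ k hk ih =>
      obtain ⟨hak, hlo, hhi⟩ := ih
      obtain ⟨hrlo, hrhi⟩ := hrec k hk
      have hk1 : (1:ℝ) ≤ (k:ℝ) := by exact_mod_cast hk
      have heBk : Real.exp B * ((k:ℝ) + 1) ≤ Real.log (a k) := (hDkey k hk).trans hlo
      have hlogak_pos : 2 < Real.log (a k) := by nlinarith
      have hlogak_pos' : 0 < Real.log (a k) := by linarith
      have hrpow_pos : 0 < Real.log (a k) ^ γ := Real.rpow_pos_of_pos hlogak_pos' γ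
      have hxpos : 0 < c₀ * a k * Real.log (a k) ^ γ := by positivity
      have hak1 : 0 < a (k + 1) := hxpos.trans_le hrlo
      have hlog_prod : ∀ t : ℝ, 0 < t →
          Real.log (t * a k * Real.log (a k) ^ γ) =
            Real.log t + Real.log (a k) + γ * Real.log (Real.log (a k)) := by
        intro t ht
        rw [Real.log_mul (by positivity) hrpow_pos.ne', Real.log_mul ht.ne' hak.ne',
          Real.log_rpow hlogak_pos']
      -- lower bound step
      have h1 : Real.log c₀ + Real.log (a k) + γ * Real.log (Real.log (a k)) ≤
          Real.log (a (k + 1)) := by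
        rw [← hlog_prod c₀ hc₀]
        exact Real.log_le_log hxpos hrlo
      have hloglog : B + Real.log ((k:ℝ) + 1) ≤ Real.log (Real.log (a k)) := by
        have h2 : Real.log (Real.exp B * ((k:ℝ) + 1)) ≤ Real.log (Real.log (a k)) :=
          Real.log_le_log (by positivity) heBk
        rwa [Real.log_mul (Real.exp_ne_zero B) (by positivity), Real.log_exp] at h2
      have hstep : (k:ℝ) * (Real.log ((k:ℝ) + 1) - Real.log k) ≤ 1 := by
        have hk0 : (0:ℝ) < k := by linarith
        have h3 : Real.log (((k:ℝ) + 1) / k) ≤ ((k:ℝ) + 1) / k - 1 :=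
          Real.log_le_sub_one_of_pos (by positivity)
        rw [Real.log_div (by linarith) hk0.ne'] at h3
        have h4 : ((k:ℝ) + 1) / k - 1 = 1 / k := by field_simp; ring
        rw [h4] at h3
        calc (k:ℝ) * (Real.log ((k:ℝ) + 1) - Real.log k) ≤ (k:ℝ) * (1 / k) := by
              exact mul_le_mul_of_nonneg_left h3 hk0.le
        _ = 1 := by field_simp
      have hlower : γ * ((k:ℝ) + 1) * Real.log ((k:ℝ) + 1) + D ≤ Real.log (a (k + 1)) := by
        have f1 : γ * (B + Real.log ((k:ℝ) + 1)) ≤ γ * Real.log (Real.log (a k)) :=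
          mul_le_mul_of_nonneg_left hloglog hγ.le
        have f2 : γ * ((k:ℝ) * (Real.log ((k:ℝ) + 1) - Real.log k)) ≤ γ * 1 :=
          mul_le_mul_of_nonneg_left hstep hγ.le
        have f3 : 0 ≤ Real.log c₀ + |Real.log c₀| := by
          linarith [neg_abs_le (Real.log c₀)]
        linarith [h1, hlo, f1, f2, hγB, f3]
      -- upper bound step
      have h1' : Real.log (a (k + 1)) ≤
          Real.log C₀ + Real.log (a k) + γ * Real.log (Real.log (a k)) := by
        rw [← hlog_prod C₀ hC₀]
        exact Real.log_le_log hak1 hrhi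
      have hkm4 : (4:ℝ) ≤ (k:ℝ) + m := by linarith
      have hkm0 : (0:ℝ) < (k:ℝ) + m := by linarith
      have hlogkm1 : 1 ≤ Real.log ((k:ℝ) + m) := by
        rw [Real.le_log_iff_exp_le hkm0]
        linarith [Real.exp_one_lt_d9]
      have hlogkmB' : B' ≤ Real.log ((k:ℝ) + m) := by
        have h5 : Real.exp B' ≤ (k:ℝ) + m := by linarith
        calc B' = Real.log (Real.exp B') := (Real.log_exp _).symm
        _ ≤ _ := Real.log_le_log (Real.exp_pos _) h5
      have hLk_up : Real.log (a k) ≤ (3 * γ + 1) * (((k:ℝ) + m) * Real.log ((k:ℝ) + m)) := by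
        have e1 : E ≤ ((k:ℝ) + m) * Real.log ((k:ℝ) + m) := by
          nlinarith [hmE, hlogkm1, hkm0]
        have e2 : 3 * γ * (k:ℝ) * Real.log ((k:ℝ) + m) ≤
            3 * γ * ((k:ℝ) + m) * Real.log ((k:ℝ) + m) := by
          have : 3 * γ * (k:ℝ) ≤ 3 * γ * ((k:ℝ) + m) := by nlinarith
          exact mul_le_mul_of_nonneg_right this (by linarith)
        linarith [hhi]
      have hloglog' : Real.log (Real.log (a k)) ≤
          Real.log (3 * γ + 1) + 2 * Real.log ((k:ℝ) + m) := by
        have hq : 0 < ((k:ℝ) + m) * Real.log ((k:ℝ) + m) := by positivity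
        have t1 : Real.log (Real.log (a k)) ≤
            Real.log ((3 * γ + 1) * (((k:ℝ) + m) * Real.log ((k:ℝ) + m))) :=
          Real.log_le_log hlogak_pos' hLk_up
        rw [Real.log_mul (by positivity) hq.ne', Real.log_mul hkm0.ne'
          (by positivity)] at t1
        have t2 : Real.log (Real.log ((k:ℝ) + m)) ≤ Real.log ((k:ℝ) + m) :=
          Real.log_le_log (by linarith) (Real.log_le_self hkm0.le)
        linarith
      have hupper : Real.log (a (k + 1)) ≤
          3 * γ * ((k:ℝ) + 1) * Real.log ((k:ℝ) + 1 + m) + E := by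
        have g1 : γ * Real.log (Real.log (a k)) ≤
            γ * (Real.log (3 * γ + 1) + 2 * Real.log ((k:ℝ) + m)) :=
          mul_le_mul_of_nonneg_left hloglog' hγ.le
        have g2 : γ * B' ≤ γ * Real.log ((k:ℝ) + m) :=
          mul_le_mul_of_nonneg_left hlogkmB' hγ.le
        have g3 : Real.log C₀ ≤ |Real.log C₀| := le_abs_self _
        have g4 : Real.log ((k:ℝ) + m) ≤ Real.log ((k:ℝ) + 1 + m) :=
          Real.log_le_log hkm0 (by linarith)
        have g5 : 3 * γ * (k:ℝ) * Real.log ((k:ℝ) + m) ≤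
            3 * γ * (k:ℝ) * Real.log ((k:ℝ) + 1 + m) := by
          have h30 : (0:ℝ) ≤ 3 * γ * (k:ℝ) := by positivity
          nlinarith [mul_le_mul_of_nonneg_left g4 h30]
        have g6 : γ * Real.log ((k:ℝ) + m) ≤ γ * Real.log ((k:ℝ) + 1 + m) :=
          mul_le_mul_of_nonneg_left g4 hγ.le
        linarith [h1', hhi, g1, g2, g3, g5, g6, hγB']
      have hcast : ((k + 1 : ℕ) : ℝ) = (k:ℝ) + 1 := by push_cast; ring
      refine ⟨hak1, ?_, ?_⟩
      · rw [hcast]; exact hlower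
      · rw [hcast]; exact hupper
  -- conclude
  refine ⟨Real.exp D, Real.exp (E + 3 * γ * m), Real.exp_pos D,
    Real.exp_le_exp.mpr (by nlinarith), ?_⟩
  intro n hn
  obtain ⟨hpos, hlo, hhi⟩ := key n hn
  have hn1 : (1:ℝ) ≤ (n:ℝ) := by exact_mod_cast hn
  have hn0 : (0:ℝ) < (n:ℝ) := by linarith
  constructor
  · rw [Real.rpow_def_of_pos hn0, ← Real.exp_add, ← Real.exp_log hpos]
    apply Real.exp_le_exp.mpr
    linarith [hlo]
  · rw [Real.rpow_def_of_pos hn0, ← Real.exp_add, ← Real.exp_log hpos]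
    apply Real.exp_le_exp.mpr
    have hmn : (n:ℝ) * (Real.log ((n:ℝ) + m) - Real.log n) ≤ m := by
      have h3 : Real.log (((n:ℝ) + m) / n) ≤ ((n:ℝ) + m) / n - 1 :=
        Real.log_le_sub_one_of_pos (by positivity)
      rw [Real.log_div (by linarith) hn0.ne'] at h3
      have h4 : ((n:ℝ) + m) / n - 1 = m / n := by field_simp; ring
      rw [h4] at h3
      calc (n:ℝ) * (Real.log ((n:ℝ) + m) - Real.log n) ≤ (n:ℝ) * (m / n) :=
            mul_le_mul_of_nonneg_left h3 hn0.le
      _ = m := by field_simp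
    have h6 : 3 * γ * ((n:ℝ) * (Real.log ((n:ℝ) + m) - Real.log n)) ≤ 3 * γ * m :=
      mul_le_mul_of_nonneg_left hmn (by positivity)
    linarith [hhi]
end

section
/- Let γ > 0 and 0 < c₀ ≤ C₀. There exists R > e such that for every sequence (a_k)_{k≥1} of reals with a_1 ≥ R and c₀·a_k·(log a_k)^γ ≤ a_{k+1} ≤ C₀·a_k·(log a_k)^γ for all k ≥ 1, there exist constants 0 < c ≤ C and n₀ ≥ 2 such that for all n ≥ n₀: c·n·log n ≤ log a_n ≤ C·n·log n and c·log n ≤ log(log a_n) ≤ C·log n. -/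
lemma aux_log_succ {x : ℝ} (hx : 2 ≤ x) : Real.log (x + 1) ≤ Real.log x + 1 / x := by
  have hx0 : (0:ℝ) < x := by linarith
  have h1 : Real.log (x + 1) - Real.log x = Real.log ((x + 1) / x) := by
    rw [Real.log_div (by linarith) (by linarith)]
  have h2 : Real.log ((x + 1) / x) ≤ (x + 1) / x - 1 :=
    Real.log_le_sub_one_of_pos (by positivity)
  have h3 : (x + 1) / x - 1 = 1 / x := by field_simp; ring
  linarith

lemma aux1 {x : ℝ} (hx : 2 ≤ x) :
    (x + 1) * Real.log (x + 1) ≤ x * Real.log x + 4 * Real.log x := by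
  have hx0 : (0:ℝ) < x := by linarith
  have h1 := aux_log_succ hx
  have hlog2 : Real.log 2 ≤ Real.log x := Real.log_le_log (by norm_num) hx
  have hl2 : (0.6931471803 : ℝ) < Real.log 2 := Real.log_two_gt_d9
  have hxx : (x + 1) / x ≤ 3 / 2 := by rw [div_le_iff₀ hx0]; linarith
  have h2 : (x + 1) * Real.log (x + 1) ≤ (x + 1) * (Real.log x + 1 / x) :=
    mul_le_mul_of_nonneg_left h1 (by linarith)
  have h3 : (x + 1) * (Real.log x + 1 / x) = x * Real.log x + Real.log x + (x + 1) / x := by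
    field_simp
  linarith

lemma aux2 {x : ℝ} (hx : 2 ≤ x) :
    x * Real.log x + Real.log (x + 1) ≤ (x + 1) * Real.log (x + 1) := by
  have hx0 : (0:ℝ) < x := by linarith
  have h1 : Real.log x ≤ Real.log (x + 1) := Real.log_le_log hx0 (by linarith)
  nlinarith

lemma aux_loglog {x : ℝ} (hx : 2 ≤ x) : Real.log (Real.log x) ≤ Real.log x := by
  have h1 : 0 < Real.log x := Real.log_pos (by linarith)
  have h2 : Real.log (Real.log x) ≤ Real.log x - 1 := Real.log_le_sub_one_of_pos h1
  linarith

set_option maxHeartbeats 1000000 in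
/-- For `γ > 0` and `0 < c₀ ≤ C₀` there exists `R > e` such that any
sequence with `a 1 ≥ R` and `c₀·a_k·(log a_k)^γ ≤ a_{k+1} ≤ C₀·a_k·(log a_k)^γ`
satisfies, for some `0 < c ≤ C` and `n₀ ≥ 2`, for all `n ≥ n₀`:
`c·n·log n ≤ log a_n ≤ C·n·log n` and `c·log n ≤ log log a_n ≤ C·log n`. -/
theorem stmt_10 (γ c₀ C₀ : ℝ) (hγ : 0 < γ) (hc₀ : 0 < c₀) (hc₀C₀ : c₀ ≤ C₀) :
    ∃ R : ℝ, Real.exp 1 < R ∧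
      ∀ a : ℕ → ℝ, R ≤ a 1 →
        (∀ k ≥ 1, c₀ * a k * Real.log (a k) ^ γ ≤ a (k + 1) ∧
                  a (k + 1) ≤ C₀ * a k * Real.log (a k) ^ γ) →
        ∃ c C : ℝ, ∃ n₀ : ℕ, 0 < c ∧ c ≤ C ∧ 2 ≤ n₀ ∧
          ∀ n : ℕ, n₀ ≤ n →
            (c * n * Real.log n ≤ Real.log (a n) ∧
             Real.log (a n) ≤ C * n * Real.log n) ∧
            (c * Real.log n ≤ Real.log (Real.log (a n)) ∧
             Real.log (Real.log (a n)) ≤ C * Real.log n) := by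
  set m : ℝ := γ / 2 with hmdef
  have hm0 : 0 < m := by positivity
  set M : ℝ := γ + max 0 (Real.log C₀) with hMdef
  have hM0 : 0 < M := by
    have := le_max_left (0:ℝ) (Real.log C₀); simp only [hMdef]; linarith
  set T : ℝ := max 1 (max (2 / γ) ((2 / γ) * max 0 (-Real.log c₀))) with hTdef
  have hT1 : (1:ℝ) ≤ T := le_max_left _ _
  have hT2 : 2 / γ ≤ T := le_trans (le_max_left _ _) (le_max_right _ _)
  have hT3 : (2 / γ) * max 0 (-Real.log c₀) ≤ T := le_trans (le_max_right _ _) (le_max_right _ _)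
  clear_value m M T
  have hlog2pos : (0:ℝ) < Real.log 2 := Real.log_pos (by norm_num)
  refine ⟨Real.exp (Real.exp T), ?_, ?_⟩
  · have h1 : (1:ℝ) < Real.exp T := by
      have := Real.add_one_le_exp T; linarith
    exact Real.exp_lt_exp.mpr h1
  intro a ha hrec
  -- invariant: a k > 0 and log (a k) ≥ exp T for k ≥ 1
  have key : ∀ k, 1 ≤ k → 0 < a k ∧ Real.exp T ≤ Real.log (a k) := by
    intro k hk
    induction k, hk using Nat.le_induction with
    | base =>
      have h1 : (0:ℝ) < Real.exp (Real.exp T) := Real.exp_pos _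
      refine ⟨lt_of_lt_of_le h1 ha, ?_⟩
      calc Real.exp T = Real.log (Real.exp (Real.exp T)) := (Real.log_exp _).symm
        _ ≤ Real.log (a 1) := Real.log_le_log h1 ha
    | succ k hk ih =>
      obtain ⟨hpos, hb⟩ := ih
      obtain ⟨hlo, _⟩ := hrec k hk
      have hbpos : 0 < Real.log (a k) := lt_of_lt_of_le (Real.exp_pos T) hb
      have h1 : 0 < c₀ * a k * Real.log (a k) ^ γ := by positivity
      have hpos' : 0 < a (k + 1) := lt_of_lt_of_le h1 hlo
      refine ⟨hpos', ?_⟩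
      have h2 : Real.log (c₀ * a k * Real.log (a k) ^ γ) ≤ Real.log (a (k + 1)) :=
        Real.log_le_log h1 hlo
      rw [Real.log_mul (by positivity) (by positivity),
        Real.log_mul (ne_of_gt hc₀) (ne_of_gt hpos), Real.log_rpow hbpos] at h2
      have hTlog : T ≤ Real.log (Real.log (a k)) := by
        calc T = Real.log (Real.exp T) := (Real.log_exp _).symm
          _ ≤ _ := Real.log_le_log (Real.exp_pos _) hb
      have hmT : (1:ℝ) ≤ m * T := by
        have h3 : m * (2 / γ) = 1 := by rw [hmdef]; field_simp
        have h4 := mul_le_mul_of_nonneg_left hT2 hm0.le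
        linarith
      have hmc : -Real.log c₀ ≤ m * T := by
        have h3 : m * ((2 / γ) * max 0 (-Real.log c₀)) = max 0 (-Real.log c₀) := by
          rw [hmdef]; field_simp
        have h4 : -Real.log c₀ ≤ max 0 (-Real.log c₀) := le_max_right _ _
        have h5 := mul_le_mul_of_nonneg_left hT3 hm0.le
        linarith
      have hmL : m * T ≤ m * Real.log (Real.log (a k)) :=
        mul_le_mul_of_nonneg_left hTlog hm0.le
      have hγL : γ * Real.log (Real.log (a k)) =
          m * Real.log (Real.log (a k)) + m * Real.log (Real.log (a k)) := by
        rw [hmdef]; ring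
      have hexp : Real.exp T ≤ Real.log (a k) := hb
      linarith
  have gaps : ∀ k, 1 ≤ k →
      Real.log (a k) + m * Real.log (Real.log (a k)) ≤ Real.log (a (k + 1)) ∧
      Real.log (a (k + 1)) ≤ Real.log (a k) + M * Real.log (Real.log (a k)) ∧
      1 ≤ m * Real.log (Real.log (a k)) := by
    intro k hk
    obtain ⟨hpos, hb⟩ := key k hk
    obtain ⟨hpos', _⟩ := key (k + 1) (by omega)
    obtain ⟨hlo, hhi⟩ := hrec k hk
    have hbpos : 0 < Real.log (a k) := lt_of_lt_of_le (Real.exp_pos T) hb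
    have hTlog : T ≤ Real.log (Real.log (a k)) := by
      calc T = Real.log (Real.exp T) := (Real.log_exp _).symm
        _ ≤ _ := Real.log_le_log (Real.exp_pos _) hb
    have hL1 : (1:ℝ) ≤ Real.log (Real.log (a k)) := le_trans hT1 hTlog
    have hmT : (1:ℝ) ≤ m * T := by
      have h3 : m * (2 / γ) = 1 := by rw [hmdef]; field_simp
      have h4 := mul_le_mul_of_nonneg_left hT2 hm0.le
      linarith
    have hmc : -Real.log c₀ ≤ m * T := by
      have h3 : m * ((2 / γ) * max 0 (-Real.log c₀)) = max 0 (-Real.log c₀) := by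
        rw [hmdef]; field_simp
      have h4 : -Real.log c₀ ≤ max 0 (-Real.log c₀) := le_max_right _ _
      have h5 := mul_le_mul_of_nonneg_left hT3 hm0.le
      linarith
    have hmL : m * T ≤ m * Real.log (Real.log (a k)) :=
      mul_le_mul_of_nonneg_left hTlog hm0.le
    have hm1 : (1:ℝ) ≤ m * Real.log (Real.log (a k)) := le_trans hmT hmL
    have h1 : 0 < c₀ * a k * Real.log (a k) ^ γ := by positivity
    have h2 : Real.log (c₀ * a k * Real.log (a k) ^ γ) ≤ Real.log (a (k + 1)) :=
      Real.log_le_log h1 hlo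
    rw [Real.log_mul (by positivity) (by positivity),
      Real.log_mul (ne_of_gt hc₀) (ne_of_gt hpos), Real.log_rpow hbpos] at h2
    have h5 : Real.log (a (k + 1)) ≤ Real.log (C₀ * a k * Real.log (a k) ^ γ) :=
      Real.log_le_log hpos' hhi
    have hC₀ : 0 < C₀ := lt_of_lt_of_le hc₀ hc₀C₀
    rw [Real.log_mul (by positivity) (by positivity),
      Real.log_mul (ne_of_gt hC₀) (ne_of_gt hpos), Real.log_rpow hbpos] at h5
    have hγL : γ * Real.log (Real.log (a k)) =
        m * Real.log (Real.log (a k)) + m * Real.log (Real.log (a k)) := by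
      rw [hmdef]; ring
    refine ⟨by linarith, ?_, hm1⟩
    have h6 : Real.log C₀ ≤ max 0 (Real.log C₀) := le_max_right _ _
    have h7 : max 0 (Real.log C₀) * 1 ≤ max 0 (Real.log C₀) * Real.log (Real.log (a k)) :=
      mul_le_mul_of_nonneg_left hL1 (le_max_left _ _)
    have hML : M * Real.log (Real.log (a k)) =
        γ * Real.log (Real.log (a k)) + max 0 (Real.log C₀) * Real.log (Real.log (a k)) := by
      rw [hMdef]; ring
    have h8 : Real.log C₀ * 1 ≤ max 0 (Real.log C₀) * Real.log (Real.log (a k)) := by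
      calc Real.log C₀ * 1 ≤ max 0 (Real.log C₀) * 1 := by linarith
        _ ≤ _ := h7
    linarith
  -- log (a n) ≥ n
  have blow : ∀ n : ℕ, 1 ≤ n → (n : ℝ) ≤ Real.log (a n) := by
    intro n hn
    induction n, hn using Nat.le_induction with
    | base =>
      have hb := (key 1 le_rfl).2
      have := Real.add_one_le_exp T
      push_cast
      linarith
    | succ k hk ih =>
      obtain ⟨hgl, _, hm1⟩ := gaps k hk
      push_cast
      push_cast at ih
      linarith
  have hb2 : (2:ℝ) ≤ Real.log (a 2) := by
    have := blow 2 (by norm_num); push_cast at this; linarith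
  set ε : ℝ := min (m / 4) (Real.log (a 2) / (2 * Real.log 2)) with hεdef
  have hε0 : 0 < ε := lt_min (by positivity) (by positivity)
  have hεle1 : ε ≤ m / 4 := min_le_left _ _
  have hεle2 : ε ≤ Real.log (a 2) / (2 * Real.log 2) := min_le_right _ _
  clear_value ε
  have lowbound : ∀ n : ℕ, 2 ≤ n → ε * n * Real.log n ≤ Real.log (a n) := by
    intro n hn
    induction n, hn using Nat.le_induction with
    | base =>
      have h1 : ε ≤ Real.log (a 2) / (2 * Real.log 2) := hεle2
      have h2 : ε * (2 * Real.log 2) ≤ Real.log (a 2) := by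
        rw [← le_div_iff₀ (by positivity)]; exact h1
      push_cast
      linarith
    | succ k hk ih =>
      have hk2 : (2:ℝ) ≤ (k:ℝ) := by exact_mod_cast hk
      obtain ⟨hgl, _, hm1⟩ := gaps k (by omega)
      have hbk : (k:ℝ) ≤ Real.log (a k) := blow k (by omega)
      have hlogk : Real.log (k:ℝ) ≤ Real.log (Real.log (a k)) :=
        Real.log_le_log (by linarith) hbk
      have hlogk0 : 0 ≤ Real.log (k:ℝ) := Real.log_nonneg (by linarith)
      have h1 : ((k:ℝ) + 1) * Real.log ((k:ℝ) + 1) ≤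
          (k:ℝ) * Real.log (k:ℝ) + 4 * Real.log (k:ℝ) := aux1 hk2
      have hεm : ε ≤ m / 4 := hεle1
      have h2 : ε * (4 * Real.log (k:ℝ)) ≤ m * Real.log (Real.log (a k)) := by
        calc ε * (4 * Real.log (k:ℝ)) ≤ (m / 4) * (4 * Real.log (k:ℝ)) :=
              mul_le_mul_of_nonneg_right hεm (by positivity)
          _ = m * Real.log (k:ℝ) := by ring
          _ ≤ m * Real.log (Real.log (a k)) := mul_le_mul_of_nonneg_left hlogk hm0.le
      have h3 : ε * (((k:ℝ) + 1) * Real.log ((k:ℝ) + 1)) ≤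
          ε * ((k:ℝ) * Real.log (k:ℝ) + 4 * Real.log (k:ℝ)) :=
        mul_le_mul_of_nonneg_left h1 hε0.le
      push_cast
      push_cast at ih
      linarith
  -- upper bound constant
  set A : ℝ := max (Real.log (a 2) / (2 * Real.log 2))
      (max ((8 * M / Real.log 2) ^ 2) (max (4 * M) 1)) with hAdef
  have hA1 : (1:ℝ) ≤ A := le_trans (le_max_right _ _) (le_trans (le_max_right _ _) (le_max_right _ _))
  have hA0 : (0:ℝ) < A := by linarith
  have hA4M : 4 * M ≤ A := le_trans (le_max_left _ _) (le_trans (le_max_right _ _) (le_max_right _ _))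
  have hAsq : (8 * M / Real.log 2) ^ 2 ≤ A := le_trans (le_max_left _ _) (le_max_right _ _)
  have hAb2 : Real.log (a 2) / (2 * Real.log 2) ≤ A := le_max_left _ _
  clear_value A
  have hAstep : ∀ x : ℝ, 2 ≤ x → M * Real.log (A * (x * Real.log x)) ≤ A * Real.log x := by
    intro x hx
    have hx0 : (0:ℝ) < x := by linarith
    have hlx : Real.log 2 ≤ Real.log x := Real.log_le_log (by norm_num) hx
    have hlx0 : 0 < Real.log x := lt_of_lt_of_le hlog2pos hlx
    have hsplit : Real.log (A * (x * Real.log x)) =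
        Real.log A + (Real.log x + Real.log (Real.log x)) := by
      rw [Real.log_mul (ne_of_gt hA0) (by positivity),
        Real.log_mul (ne_of_gt hx0) (ne_of_gt hlx0)]
    have hll : Real.log (Real.log x) ≤ Real.log x := aux_loglog hx
    have hsqrt : 8 * M / Real.log 2 ≤ Real.sqrt A := by
      have h := Real.sqrt_le_sqrt hAsq
      rwa [Real.sqrt_sq (by positivity)] at h
    have hlogA : Real.log A ≤ 2 * Real.sqrt A := by
      have h1 : Real.log A = 2 * Real.log (Real.sqrt A) := by
        rw [Real.log_sqrt hA0.le]; ring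
      have h2 : Real.log (Real.sqrt A) ≤ Real.sqrt A - 1 :=
        Real.log_le_sub_one_of_pos (Real.sqrt_pos.mpr hA0)
      linarith
    have hsq : Real.sqrt A * Real.sqrt A = A := Real.mul_self_sqrt hA0.le
    have h3 : 2 * M * Real.sqrt A ≤ (A / 2) * Real.log 2 := by
      have h31 := mul_le_mul_of_nonneg_right hsqrt (Real.sqrt_nonneg A)
      -- (8M/log2) * √A ≤ √A * √A = A
      rw [hsq] at h31
      have h32 := mul_le_mul_of_nonneg_right h31 hlog2pos.le
      have h33 : 8 * M / Real.log 2 * Real.sqrt A * Real.log 2 = 8 * M * Real.sqrt A := by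
        field_simp
      rw [h33] at h32
      nlinarith [Real.sqrt_nonneg A, hM0]
    have h4 : M * Real.log A ≤ 2 * M * Real.sqrt A := by
      have := mul_le_mul_of_nonneg_left hlogA hM0.le
      linarith
    have h5 : (A / 2) * Real.log 2 ≤ (A - 2 * M) * Real.log x := by
      have h6 : A / 2 ≤ A - 2 * M := by linarith
      have h7 : 0 ≤ A / 2 := by linarith
      exact mul_le_mul h6 hlx hlog2pos.le (by linarith)
    have h6 : M * Real.log (Real.log x) ≤ M * Real.log x :=
      mul_le_mul_of_nonneg_left hll hM0.le
    rw [hsplit]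
    have hdist : M * (Real.log A + (Real.log x + Real.log (Real.log x))) =
        M * Real.log A + M * Real.log x + M * Real.log (Real.log x) := by ring
    rw [hdist]
    have h5' : (A - 2 * M) * Real.log x = A * Real.log x - 2 * M * Real.log x := by ring
    linarith
  have upbound : ∀ n, 2 ≤ n → Real.log (a n) ≤ A * n * Real.log n := by
    intro n hn
    induction n, hn using Nat.le_induction with
    | base =>
      have h2 : Real.log (a 2) ≤ A * (2 * Real.log 2) :=
        (div_le_iff₀ (by positivity : (0:ℝ) < 2 * Real.log 2)).mp hAb2
      push_cast
      linarith
    | succ k hk ih =>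
      have hk2 : (2:ℝ) ≤ (k:ℝ) := by exact_mod_cast hk
      obtain ⟨_, hgu, _⟩ := gaps k (by omega)
      have hbk : (k:ℝ) ≤ Real.log (a k) := blow k (by omega)
      have hbkpos : 0 < Real.log (a k) := by linarith
      have hlk0 : 0 < Real.log (k:ℝ) := Real.log_pos (by linarith)
      push_cast at ih
      have hlogle : Real.log (Real.log (a k)) ≤ Real.log (A * ((k:ℝ) * Real.log (k:ℝ))) := by
        apply Real.log_le_log hbkpos
        calc Real.log (a k) ≤ A * (k:ℝ) * Real.log (k:ℝ) := ih
          _ = A * ((k:ℝ) * Real.log (k:ℝ)) := by ring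
      have hML : M * Real.log (Real.log (a k)) ≤ A * Real.log (k:ℝ) := by
        calc M * Real.log (Real.log (a k)) ≤ M * Real.log (A * ((k:ℝ) * Real.log (k:ℝ))) :=
              mul_le_mul_of_nonneg_left hlogle hM0.le
          _ ≤ A * Real.log (k:ℝ) := hAstep (k:ℝ) hk2
      have haux2 : (k:ℝ) * Real.log (k:ℝ) + Real.log ((k:ℝ) + 1) ≤
          ((k:ℝ) + 1) * Real.log ((k:ℝ) + 1) := aux2 hk2
      have hlk1 : Real.log (k:ℝ) ≤ Real.log ((k:ℝ) + 1) := Real.log_le_log (by linarith) (by linarith)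
      have hfin : A * ((k:ℝ) * Real.log (k:ℝ) + Real.log (k:ℝ)) ≤
          A * (((k:ℝ) + 1) * Real.log ((k:ℝ) + 1)) := by
        apply mul_le_mul_of_nonneg_left _ hA0.le
        linarith
      push_cast
      linarith
  -- assemble
  refine ⟨min ε 1, max A (Real.log A / Real.log 2 + 2), 2, lt_min hε0 one_pos, ?_, le_rfl, ?_⟩
  · calc min ε 1 ≤ 1 := min_le_right _ _
      _ ≤ A := hA1
      _ ≤ max A _ := le_max_left _ _
  intro n hn
  have hn2 : (2:ℝ) ≤ (n:ℝ) := by exact_mod_cast hn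
  have hbn : (n:ℝ) ≤ Real.log (a n) := blow n (by omega)
  have hbnpos : 0 < Real.log (a n) := by linarith
  have hl := lowbound n hn
  have hu := upbound n hn
  have hlogn : Real.log 2 ≤ Real.log (n:ℝ) := Real.log_le_log (by norm_num) hn2
  have hlogn0 : 0 < Real.log (n:ℝ) := lt_of_lt_of_le hlog2pos hlogn
  have hnlogn : 0 ≤ (n:ℝ) * Real.log (n:ℝ) := by positivity
  constructor
  · constructor
    · have h1 : min ε 1 * ((n:ℝ) * Real.log (n:ℝ)) ≤ ε * ((n:ℝ) * Real.log (n:ℝ)) :=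
        mul_le_mul_of_nonneg_right (min_le_left _ _) hnlogn
      linarith
    · have h1 : A * ((n:ℝ) * Real.log (n:ℝ)) ≤
          max A (Real.log A / Real.log 2 + 2) * ((n:ℝ) * Real.log (n:ℝ)) :=
        mul_le_mul_of_nonneg_right (le_max_left _ _) hnlogn
      linarith
  · constructor
    · have h1 : Real.log (n:ℝ) ≤ Real.log (Real.log (a n)) :=
        Real.log_le_log (by linarith) hbn
      have h2 : min ε 1 * Real.log (n:ℝ) ≤ 1 * Real.log (n:ℝ) :=
        mul_le_mul_of_nonneg_right (min_le_right _ _) hlogn0.le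
      linarith
    · have h1 : Real.log (Real.log (a n)) ≤ Real.log (A * ((n:ℝ) * Real.log (n:ℝ))) := by
        apply Real.log_le_log hbnpos
        calc Real.log (a n) ≤ A * (n:ℝ) * Real.log (n:ℝ) := hu
          _ = A * ((n:ℝ) * Real.log (n:ℝ)) := by ring
      have hsplit : Real.log (A * ((n:ℝ) * Real.log (n:ℝ))) =
          Real.log A + (Real.log (n:ℝ) + Real.log (Real.log (n:ℝ))) := by
        rw [Real.log_mul (ne_of_gt hA0) (by positivity),
          Real.log_mul (by positivity) (ne_of_gt hlogn0)]
      have hll : Real.log (Real.log (n:ℝ)) ≤ Real.log (n:ℝ) := aux_loglog hn2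
      have hlogA0 : 0 ≤ Real.log A := Real.log_nonneg hA1
      have h3 : Real.log A ≤ (Real.log A / Real.log 2) * Real.log (n:ℝ) := by
        rw [div_mul_eq_mul_div, le_div_iff₀ hlog2pos]
        exact mul_le_mul_of_nonneg_left hlogn hlogA0
      have h4 : max A (Real.log A / Real.log 2 + 2) * Real.log (n:ℝ) ≥
          (Real.log A / Real.log 2 + 2) * Real.log (n:ℝ) :=
        mul_le_mul_of_nonneg_right (le_max_right _ _) hlogn0.le
      linarith
end

section
/- Fix real numbers α > 2 and 0 < β < 2. Let (a_k), (b_k), (c_k), (d_k), k ≥ 1, be sequences of reals with e² < a_1 and a_k ≤ b_k < c_k ≤ d_k < a_{k+1} for all k, satisfying b_k = c_k/(log c_k)^{1/(α−2)} and a_{k+1} = d_k (log d_k)^{1/(2−β)}. Define V : (0,∞) → ℝ by V(r) = 2π r² if 0 < r < a_1 or a_k ≤ r < b_k for some k; V(r) = 2π (r/b_k)^α b_k² if b_k ≤ r < c_k; V(r) = 2π r² log r if c_k ≤ r < d_k; V(r) = 2π (r/d_k)^β d_k² log d_k if d_k ≤ r < a_{k+1}. Define h(r) = 1 + ∫_1^r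 s/V(s) ds for r ≥ 1. Assume in addition that there is A ≥ 1 with b_k ≤ A·a_k and d_k ≤ A·c_k for all k. Then there exists R > e² such that if a_1 ≥ R, there are constants 0 < c ≤ C and r₀ > e such that for all r ≥ r₀: c·(log r)/(log log r) ≤ h(r) ≤ C·(log r)/(log log r). -/
open Real MeasureTheory Set intervalIntegral


-- integrability via EqOn with continuous function
lemma intInt_of_eqOn {f g : ℝ → ℝ} {x y : ℝ} (hg : ContinuousOn g (Set.uIcc x y))
    (h : Set.EqOn f g (Set.uIcc x y)) : IntervalIntegrable f volume x y :=
  (hg.intervalIntegrable).congr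
    fun z hz => (h (Set.uIoc_subset_uIcc hz)).symm

-- quadratic piece
lemma quad_piece {V : ℝ → ℝ} {x y : ℝ} (hx : 0 < x) (hxy : x ≤ y)
    (hV : ∀ s ∈ Set.Icc x y, V s = 2 * π * s ^ 2) :
    IntervalIntegrable (fun s => s / V s) volume x y ∧
    (∫ s in x..y, s / V s) = (Real.log y - Real.log x) / (2 * π) := by
  have hIcc : Set.uIcc x y = Set.Icc x y := Set.uIcc_of_le hxy
  have hEq : Set.EqOn (fun s => s / V s) (fun s => (2*π)⁻¹ * s⁻¹) (Set.uIcc x y) := by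
    intro s hs
    rw [hIcc] at hs
    have hs0 : 0 < s := lt_of_lt_of_le hx hs.1
    simp only [hV s hs]
    field_simp
  have hg : ContinuousOn (fun s : ℝ => (2*π)⁻¹ * s⁻¹) (Set.uIcc x y) := by
    apply ContinuousOn.mul continuousOn_const
    apply ContinuousOn.inv₀ continuousOn_id
    intro s hs; rw [hIcc] at hs; exact ne_of_gt (lt_of_lt_of_le hx hs.1)
  refine ⟨intInt_of_eqOn hg hEq, ?_⟩
  rw [intervalIntegral.integral_congr hEq, intervalIntegral.integral_const_mul]
  rw [integral_inv (by rw [hIcc]; intro h0; exact absurd (h0.1) (not_le.2 hx))]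
  rw [Real.log_div (ne_of_gt (lt_of_lt_of_le hx hxy)) (ne_of_gt hx)]
  ring

-- rpow piece : V s = K * s ^ p on [x,y]
lemma rpow_piece {V : ℝ → ℝ} {x y K p : ℝ} (hx : 0 < x) (hxy : x ≤ y) (hK : 0 < K)
    (hp : p ≠ 2) (hV : ∀ s ∈ Set.Icc x y, V s = K * s ^ p) :
    IntervalIntegrable (fun s => s / V s) volume x y ∧
    (∫ s in x..y, s / V s) = (y ^ (2 - p) - x ^ (2 - p)) / (K * (2 - p)) := by
  have hIcc : Set.uIcc x y = Set.Icc x y := Set.uIcc_of_le hxy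
  have h0 : (0:ℝ) ∉ Set.uIcc x y := by rw [hIcc]; intro h0; exact absurd h0.1 (not_le.2 hx)
  have hEq : Set.EqOn (fun s => s / V s) (fun s => K⁻¹ * s ^ (1 - p)) (Set.uIcc x y) := by
    intro s hs
    rw [hIcc] at hs
    have hs0 : 0 < s := lt_of_lt_of_le hx hs.1
    simp only [hV s hs]
    rw [show (1:ℝ) - p = 1 + -p by ring, Real.rpow_add hs0, Real.rpow_one,
      Real.rpow_neg (le_of_lt hs0)]
    field_simp
  have hg : ContinuousOn (fun s : ℝ => K⁻¹ * s ^ (1 - p)) (Set.uIcc x y) := by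
    apply ContinuousOn.mul continuousOn_const
    apply ContinuousOn.rpow_const continuousOn_id
    intro s hs; left; rw [hIcc] at hs; exact ne_of_gt (lt_of_lt_of_le hx hs.1)
  refine ⟨intInt_of_eqOn hg hEq, ?_⟩
  rw [intervalIntegral.integral_congr hEq, intervalIntegral.integral_const_mul]
  rw [integral_rpow (Or.inr ⟨by intro hc; apply hp; linarith [sub_eq_iff_eq_add.mp hc], h0⟩)]
  rw [show (1:ℝ) - p + 1 = 2 - p by ring]
  field_simp

-- log piece : V s = 2π s² log s on [x,y], with 1 < x
lemma log_piece {V : ℝ → ℝ} {x y : ℝ} (hx : 1 < x) (hxy : x ≤ y)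
    (hV : ∀ s ∈ Set.Icc x y, V s = 2 * π * s ^ 2 * Real.log s) :
    IntervalIntegrable (fun s => s / V s) volume x y ∧
    (∫ s in x..y, s / V s) =
      (Real.log (Real.log y) - Real.log (Real.log x)) / (2 * π) := by
  have hIcc : Set.uIcc x y = Set.Icc x y := Set.uIcc_of_le hxy
  have hlpos : ∀ s ∈ Set.Icc x y, 0 < Real.log s := fun s hs =>
    Real.log_pos (lt_of_lt_of_le hx hs.1)
  have hEq : Set.EqOn (fun s => s / V s) (fun s => (2*π)⁻¹ * (s⁻¹ / Real.log s))
      (Set.uIcc x y) := by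
    intro s hs
    rw [hIcc] at hs
    have hs0 : 0 < s := lt_trans one_pos (lt_of_lt_of_le hx hs.1)
    have hl := hlpos s hs
    simp only [hV s hs]
    field_simp
  have hg : ContinuousOn (fun s : ℝ => (2*π)⁻¹ * (s⁻¹ / Real.log s)) (Set.uIcc x y) := by
    apply ContinuousOn.mul continuousOn_const
    apply ContinuousOn.div
    · apply ContinuousOn.inv₀ continuousOn_id
      intro s hs; rw [hIcc] at hs
      exact ne_of_gt (lt_trans one_pos (lt_of_lt_of_le hx hs.1))
    · exact Real.continuousOn_log.mono (by
        rw [hIcc]; intro s hs; exact ne_of_gt (lt_trans one_pos (lt_of_lt_of_le hx hs.1)))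
    · intro s hs; rw [hIcc] at hs; exact ne_of_gt (hlpos s hs)
  refine ⟨intInt_of_eqOn hg hEq, ?_⟩
  rw [intervalIntegral.integral_congr hEq]
  have hder : ∀ s ∈ Set.uIcc x y,
      HasDerivAt (fun t => (2*π)⁻¹ * Real.log (Real.log t))
        ((2*π)⁻¹ * (s⁻¹ / Real.log s)) s := by
    intro s hs
    rw [hIcc] at hs
    have hs0 : 0 < s := lt_trans one_pos (lt_of_lt_of_le hx hs.1)
    have hl := hlpos s hs
    have h1 : HasDerivAt Real.log s⁻¹ s := Real.hasDerivAt_log (ne_of_gt hs0)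
    exact (h1.log (ne_of_gt hl)).const_mul _
  rw [intervalIntegral.integral_eq_sub_of_hasDerivAt hder (hg.intervalIntegrable)]
  ring

set_option maxHeartbeats 1000000 in
lemma block_lemma {V : ℝ → ℝ} {α β M a b c d a' : ℝ}
    (hα : 2 < α) (hβ2 : β < 2) (hM : 1 ≤ M)
    (ha : Real.exp 2 < a) (hab : a ≤ b) (hbc : b < c) (hcd : c ≤ d) (hda : d < a')
    (hbM : b ≤ M * a) (hdM : d ≤ M * c)
    (hadef : a' = d * Real.log d ^ ((1:ℝ)/(2-β)))
    (hV1 : ∀ s ∈ Set.Icc a b, V s = 2 * π * s ^ 2)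
    (hV2 : ∀ s ∈ Set.Icc b c, V s = (2 * π * b ^ ((2:ℝ)-α)) * s ^ α)
    (hV3 : ∀ s ∈ Set.Icc c d, V s = 2 * π * s ^ 2 * Real.log s)
    (hV4 : ∀ s ∈ Set.Icc d a', V s = (2 * π * d ^ ((2:ℝ)-β) * Real.log d) * s ^ β) :
    IntervalIntegrable (fun s => s / V s) volume a a' ∧
    1/(4*π*(2-β)) ≤ (∫ s in a..a', s / V s) ∧
    (∫ s in a..a', s / V s) ≤
      (Real.log M)/(2*π) + 1/(2*π*(α-2)) + (Real.log M)/(4*π) + 1/(2*π*(2-β)) := by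
  have hπ : (0:ℝ) < π := Real.pi_pos
  have he2 : (1:ℝ) < Real.exp 2 := by
    calc (1:ℝ) = Real.exp 0 := (Real.exp_zero).symm
    _ < Real.exp 2 := Real.exp_lt_exp.2 (by norm_num)
  have ha0 : 0 < a := lt_trans one_pos (lt_trans he2 ha)
  have hb0 : 0 < b := lt_of_lt_of_le ha0 hab
  have hc0 : 0 < c := lt_trans hb0 hbc
  have hd0 : 0 < d := lt_of_lt_of_le hc0 hcd
  have hc2 : Real.exp 2 < c := lt_of_le_of_lt hab hbc |>.trans_le' ha.le
  have hd2 : Real.exp 2 < d := lt_of_lt_of_le hc2 hcd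
  have hc1 : 1 < c := lt_trans he2 hc2
  have hLc2 : (2:ℝ) ≤ Real.log c := by
    rw [show (2:ℝ) = Real.log (Real.exp 2) by rw [Real.log_exp]]
    exact Real.log_le_log (Real.exp_pos 2) hc2.le
  have hLd2 : (2:ℝ) ≤ Real.log d := by
    rw [show (2:ℝ) = Real.log (Real.exp 2) by rw [Real.log_exp]]
    exact Real.log_le_log (Real.exp_pos 2) hd2.le
  have hLc0 : 0 < Real.log c := lt_of_lt_of_le two_pos hLc2
  have hLd0 : 0 < Real.log d := lt_of_lt_of_le two_pos hLd2
  have hM0 : 0 < M := lt_of_lt_of_le one_pos hM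
  have hlogM : 0 ≤ Real.log M := Real.log_nonneg hM
  have h2β : (0:ℝ) < 2 - β := by linarith
  have hα2 : (0:ℝ) < α - 2 := by linarith
  -- pieces
  have hK2 : (0:ℝ) < 2 * π * b ^ ((2:ℝ)-α) := by positivity
  have hK4 : (0:ℝ) < 2 * π * d ^ ((2:ℝ)-β) * Real.log d := by positivity
  obtain ⟨Q1, E1⟩ := quad_piece ha0 hab hV1
  obtain ⟨Q2, E2⟩ := rpow_piece hb0 hbc.le hK2 (by intro hh; exact absurd hh (ne_of_gt hα)) hV2
  obtain ⟨Q3, E3⟩ := log_piece hc1 hcd hV3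
  obtain ⟨Q4, E4⟩ := rpow_piece hd0 hda.le hK4 (by intro hh; linarith) hV4
  refine ⟨((Q1.trans Q2).trans Q3).trans Q4, ?_⟩
  have hsum : (∫ s in a..a', s / V s) =
      (∫ s in a..b, s / V s) + (∫ s in b..c, s / V s) +
      (∫ s in c..d, s / V s) + (∫ s in d..a', s / V s) := by
    rw [integral_add_adjacent_intervals Q1 Q2, integral_add_adjacent_intervals (Q1.trans Q2) Q3,
       integral_add_adjacent_intervals ((Q1.trans Q2).trans Q3) Q4]
  -- bounds for piece 1
  have hI1low : (0:ℝ) ≤ (Real.log b - Real.log a) / (2*π) := by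
    have := Real.log_le_log ha0 hab
    apply div_nonneg (by linarith) (by positivity)
  have hI1up : (Real.log b - Real.log a) / (2*π) ≤ Real.log M / (2*π) := by
    have : Real.log b ≤ Real.log M + Real.log a := by
      rw [← Real.log_mul (ne_of_gt hM0) (ne_of_gt ha0)]
      exact Real.log_le_log hb0 hbM
    gcongr
    linarith
  -- bounds for piece 2
  have hu : (0:ℝ) < b ^ ((2:ℝ)-α) := Real.rpow_pos_of_pos hb0 _
  have hv0 : (0:ℝ) ≤ c ^ ((2:ℝ)-α) := (Real.rpow_pos_of_pos hc0 _).le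
  have hvu : c ^ ((2:ℝ)-α) ≤ b ^ ((2:ℝ)-α) :=
    Real.rpow_le_rpow_of_nonpos hb0 hbc.le (by linarith)
  have hI2eq : (c ^ ((2:ℝ)-α) - b ^ ((2:ℝ)-α)) / (2 * π * b ^ ((2:ℝ)-α) * (2 - α))
      = (b ^ ((2:ℝ)-α) - c ^ ((2:ℝ)-α)) / (2 * π * b ^ ((2:ℝ)-α) * (α - 2)) := by
    rw [show c ^ ((2:ℝ)-α) - b ^ ((2:ℝ)-α) = -(b ^ ((2:ℝ)-α) - c ^ ((2:ℝ)-α)) by ring,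
      show 2 * π * b ^ ((2:ℝ)-α) * (2 - α) = -(2 * π * b ^ ((2:ℝ)-α) * (α - 2)) by ring,
      neg_div_neg_eq]
  have hI2low : (0:ℝ) ≤ (b ^ ((2:ℝ)-α) - c ^ ((2:ℝ)-α)) / (2 * π * b ^ ((2:ℝ)-α) * (α - 2)) := by
    apply div_nonneg (by linarith) (by positivity)
  have hI2up : (b ^ ((2:ℝ)-α) - c ^ ((2:ℝ)-α)) / (2 * π * b ^ ((2:ℝ)-α) * (α - 2))
      ≤ 1/(2*π*(α-2)) := by
    have h1 : (b ^ ((2:ℝ)-α) - c ^ ((2:ℝ)-α)) / (2 * π * b ^ ((2:ℝ)-α) * (α - 2))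
        ≤ (b ^ ((2:ℝ)-α)) / (2 * π * b ^ ((2:ℝ)-α) * (α - 2)) :=
      div_le_div₀ hu.le (by linarith) (by positivity) (le_refl _)
    have h2 : (b ^ ((2:ℝ)-α)) / (2 * π * b ^ ((2:ℝ)-α) * (α - 2)) = 1/(2*π*(α-2)) := by
      rw [show (2:ℝ) * π * b ^ ((2:ℝ)-α) * (α - 2) = b ^ ((2:ℝ)-α) * (2*π*(α-2)) by ring]
      rw [div_mul_eq_div_div, div_self (ne_of_gt hu)]
    linarith
  -- bounds for piece 3
  have hLcd : Real.log c ≤ Real.log d := Real.log_le_log hc0 hcd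
  have hI3low : (0:ℝ) ≤ (Real.log (Real.log d) - Real.log (Real.log c)) / (2*π) := by
    have := Real.log_le_log hLc0 hLcd
    apply div_nonneg (by linarith) (by positivity)
  have hI3up : (Real.log (Real.log d) - Real.log (Real.log c)) / (2*π) ≤ Real.log M / (4*π) := by
    have hd1 : Real.log (Real.log d) - Real.log (Real.log c)
        = Real.log (Real.log d / Real.log c) := by
      rw [Real.log_div (ne_of_gt hLd0) (ne_of_gt hLc0)]
    have hd2' : Real.log (Real.log d / Real.log c) ≤ Real.log d / Real.log c - 1 :=
      Real.log_le_sub_one_of_pos (by positivity)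
    have hd3 : Real.log d / Real.log c - 1 = (Real.log d - Real.log c) / Real.log c := by
      field_simp
    have hd4 : Real.log d - Real.log c ≤ Real.log M := by
      have : Real.log d ≤ Real.log M + Real.log c := by
        rw [← Real.log_mul (ne_of_gt hM0) (ne_of_gt hc0)]
        exact Real.log_le_log hd0 hdM
      linarith
    have hd5 : (Real.log d - Real.log c) / Real.log c ≤ Real.log M / 2 := by
      apply div_le_div₀ hlogM hd4 two_pos hLc2
    have hd6 : Real.log (Real.log d) - Real.log (Real.log c) ≤ Real.log M / 2 := by
      rw [hd1]; linarith
    calc (Real.log (Real.log d) - Real.log (Real.log c)) / (2*π)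
        ≤ (Real.log M / 2) / (2*π) := by gcongr
      _ = Real.log M / (4*π) := by ring
  -- bounds for piece 4
  have hLd0' : (0:ℝ) ≤ Real.log d := hLd0.le
  have haL : a' ^ ((2:ℝ)-β) = d ^ ((2:ℝ)-β) * Real.log d := by
    rw [hadef, Real.mul_rpow hd0.le (Real.rpow_nonneg hLd0' _),
      ← Real.rpow_mul hLd0', one_div, inv_mul_cancel₀ (ne_of_gt h2β), Real.rpow_one]
  have hw : (0:ℝ) < d ^ ((2:ℝ)-β) := Real.rpow_pos_of_pos hd0 _
  have hI4eq : (a' ^ ((2:ℝ)-β) - d ^ ((2:ℝ)-β)) / (2 * π * d ^ ((2:ℝ)-β) * Real.log d * (2 - β))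
      = (Real.log d - 1) / (2 * π * Real.log d * (2 - β)) := by
    rw [haL, show d ^ ((2:ℝ)-β) * Real.log d - d ^ ((2:ℝ)-β)
        = d ^ ((2:ℝ)-β) * (Real.log d - 1) by ring,
      show 2 * π * d ^ ((2:ℝ)-β) * Real.log d * (2 - β)
        = d ^ ((2:ℝ)-β) * (2 * π * Real.log d * (2 - β)) by ring,
      mul_div_mul_left _ _ (ne_of_gt hw)]
  have hI4low : 1/(4*π*(2-β)) ≤ (Real.log d - 1) / (2 * π * Real.log d * (2 - β)) := by
    rw [div_le_div_iff₀ (by positivity) (by positivity)]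
    nlinarith [mul_nonneg (mul_pos hπ h2β).le (by linarith : (0:ℝ) ≤ Real.log d - 2)]
  have hI4up : (Real.log d - 1) / (2 * π * Real.log d * (2 - β)) ≤ 1/(2*π*(2-β)) := by
    rw [div_le_div_iff₀ (by positivity) (by positivity)]
    nlinarith [mul_pos hπ h2β]
  constructor
  · rw [hsum, E1, E2, E3, E4, hI2eq, hI4eq]
    linarith
  · rw [hsum, E1, E2, E3, E4, hI2eq, hI4eq]
    linarith



lemma log_le_two_sqrt {y : ℝ} (hy : 1 ≤ y) : Real.log y ≤ 2 * Real.sqrt y := by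
  have h0 : (0:ℝ) < y := by linarith
  have h1 : Real.log y = 2 * Real.log (Real.sqrt y) := by
    rw [Real.log_sqrt h0.le]; ring
  have h2 : Real.log (Real.sqrt y) ≤ Real.sqrt y - 1 :=
    Real.log_le_sub_one_of_pos (Real.sqrt_pos.2 h0)
  nlinarith [Real.sqrt_nonneg y]

set_option maxHeartbeats 1000000 in
lemma logstep {α β M a b c d a' : ℝ} (hα : 2 < α) (hβ0 : 0 < β) (hβ2 : β < 2) (hM : 1 ≤ M)
    (ha : Real.exp 2 < a) (hab : a ≤ b) (hbc : b < c) (hcd : c ≤ d) (hda : d < a')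
    (hbM : b ≤ M * a) (hdM : d ≤ M * c)
    (hbdef : b = c / Real.log c ^ ((1:ℝ)/(α-2)))
    (hadef : a' = d * Real.log d ^ ((1:ℝ)/(2-β)))
    (hθ : (4/(α-2))^2 ≤ Real.log a) (hℓ : 1 ≤ Real.log (Real.log a)) :
    (1/(α-2)) * Real.log (Real.log a) ≤ Real.log a' - Real.log a ∧
    Real.log a' - Real.log a ≤
      (2*Real.log M + (1/(α-2) + 1/(2-β)) * (1 + Real.log (2 + 3*Real.log M)))
        * Real.log (Real.log a) := by
  have hα2 : (0:ℝ) < α - 2 := by linarith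
  have h2β : (0:ℝ) < 2 - β := by linarith
  have he2 : (1:ℝ) < Real.exp 2 := by
    calc (1:ℝ) = Real.exp 0 := (Real.exp_zero).symm
    _ < Real.exp 2 := Real.exp_lt_exp.2 (by norm_num)
  have ha0 : 0 < a := lt_trans one_pos (lt_trans he2 ha)
  have hb0 : 0 < b := lt_of_lt_of_le ha0 hab
  have hc0 : 0 < c := lt_trans hb0 hbc
  have hd0 : 0 < d := lt_of_lt_of_le hc0 hcd
  have hM0 : 0 < M := lt_of_lt_of_le one_pos hM
  have hlogM : 0 ≤ Real.log M := Real.log_nonneg hM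
  set T := Real.log a with hT
  have hT2 : 2 ≤ T := by
    rw [hT, show (2:ℝ) = Real.log (Real.exp 2) by rw [Real.log_exp]]
    exact Real.log_le_log (Real.exp_pos 2) ha.le
  have hT0 : 0 < T := by linarith
  set ℓ := Real.log T with hℓdef
  have hℓ0 : 0 < ℓ := by rw [hℓdef]; linarith [hℓ]
  set Lc := Real.log c with hLc
  set Ld := Real.log d with hLd
  have hTLc : T ≤ Lc := Real.log_le_log ha0 (le_of_lt (lt_of_le_of_lt hab hbc))
  have hLc0 : 0 < Lc := lt_of_lt_of_le hT0 hTLc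
  have hLcLd : Lc ≤ Ld := Real.log_le_log hc0 hcd
  have hLd0 : 0 < Ld := lt_of_lt_of_le hLc0 hLcLd
  -- log of b and a'
  have hlogb : Real.log b = Lc - (1/(α-2)) * Real.log Lc := by
    rw [hbdef, Real.log_div (ne_of_gt hc0) (ne_of_gt (Real.rpow_pos_of_pos hLc0 _)),
      Real.log_rpow hLc0]
  have hloga' : Real.log a' = Ld + (1/(2-β)) * Real.log Ld := by
    rw [hadef, Real.log_mul (ne_of_gt hd0) (ne_of_gt (Real.rpow_pos_of_pos hLd0 _)),
      Real.log_rpow hLd0]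
  have hlogab : Real.log a ≤ Real.log b := Real.log_le_log ha0 hab
  have hlogbM : Real.log b ≤ Real.log M + Real.log a := by
    rw [← Real.log_mul (ne_of_gt hM0) (ne_of_gt ha0)]
    exact Real.log_le_log hb0 hbM
  have hlogdM : Ld ≤ Real.log M + Lc := by
    rw [hLd, hLc, ← Real.log_mul (ne_of_gt hM0) (ne_of_gt hc0)]
    exact Real.log_le_log hd0 hdM
  have hℓLc : ℓ ≤ Real.log Lc := Real.log_le_log hT0 hTLc
  have hLcLd' : Real.log Lc ≤ Real.log Ld := Real.log_le_log hLc0 hLcLd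
  have hℓLd : ℓ ≤ Real.log Ld := le_trans hℓLc hLcLd'
  constructor
  · -- lower bound
    have h1 : Real.log a' - Real.log a
        = (Real.log b - Real.log a) + (1/(α-2)) * Real.log Lc
          + (Ld - Lc) + (1/(2-β)) * Real.log Ld := by
      have hb' : Real.log b = Lc - (1/(α-2)) * Real.log Lc := hlogb
      rw [hloga']; linarith [hb']
    rw [h1]
    have t1 : 0 ≤ Real.log b - Real.log a := by linarith
    have t2 : (1/(α-2)) * ℓ ≤ (1/(α-2)) * Real.log Lc := by
      apply mul_le_mul_of_nonneg_left hℓLc (by positivity)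
    have t3 : (0:ℝ) ≤ Ld - Lc := by linarith
    have t4 : 0 ≤ (1/(2-β)) * Real.log Ld := by
      apply mul_nonneg (by positivity) (le_trans hℓ0.le hℓLd)
    linarith
  · -- upper bound
    -- key : (1/(α-2)) * log Lc ≤ Lc / 2
    have hLcθ : (4/(α-2))^2 ≤ Lc := le_trans hθ hTLc
    have hsq : 4/(α-2) ≤ Real.sqrt Lc := by
      rw [show 4/(α-2) = Real.sqrt ((4/(α-2))^2) by
        rw [Real.sqrt_sq (by positivity)]]
      exact Real.sqrt_le_sqrt hLcθ
    have hLc1 : 1 ≤ Lc := by linarith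
    have hkey : (1/(α-2)) * Real.log Lc ≤ Lc / 2 := by
      have h1 : Real.log Lc ≤ 2 * Real.sqrt Lc := log_le_two_sqrt hLc1
      have h2 : Real.sqrt Lc * Real.sqrt Lc = Lc := Real.mul_self_sqrt hLc0.le
      have hsq' : 4 ≤ Real.sqrt Lc * (α-2) := by
        rw [div_le_iff₀ hα2] at hsq; linarith
      have h2' : Real.sqrt Lc * (Real.sqrt Lc * (α-2)) = Lc * (α-2) := by
        rw [← mul_assoc, h2]
      have hstep2 : 4 * Real.sqrt Lc ≤ Lc * (α-2) := by
        linarith only [mul_le_mul_of_nonneg_left hsq' (Real.sqrt_nonneg Lc), h2']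
      rw [div_mul_eq_mul_div, one_mul, div_le_div_iff₀ hα2 two_pos]
      linarith
    -- Lc ≤ 2T + 2 log M
    have hLcb : Lc ≤ 2*T + 2*Real.log M := by
      have heq : Lc = Real.log b + (1/(α-2)) * Real.log Lc := by linarith [hlogb]
      linarith [hlogbM, hkey]
    have hLdb : Ld ≤ 2*T + 3*Real.log M := by linarith [hlogdM]
    -- log Lc, log Ld ≤ ℓ * (1 + log (2 + 3 log M))
    have hE0 : (1:ℝ) ≤ 2 + 3*Real.log M := by linarith
    have hlogE : 0 ≤ Real.log (2 + 3*Real.log M) := Real.log_nonneg hE0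
    have hbound : ∀ x : ℝ, 0 < x → x ≤ 2*T + 3*Real.log M →
        Real.log x ≤ ℓ * (1 + Real.log (2 + 3*Real.log M)) := by
      intro x hx0 hxb
      have h1 : x ≤ T * (2 + 3*Real.log M) := by
        nlinarith only [hxb, mul_nonneg hlogM (by linarith only [hT2] : (0:ℝ) ≤ T - 1)]
      have h2 : Real.log x ≤ Real.log (T * (2 + 3*Real.log M)) := Real.log_le_log hx0 h1
      rw [Real.log_mul (ne_of_gt hT0) (by linarith)] at h2
      have hℓ1 : 1 ≤ ℓ := hℓ
      have h3 : Real.log (2 + 3*Real.log M) ≤ ℓ * Real.log (2 + 3*Real.log M) := by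
        nlinarith only [mul_nonneg (by linarith only [hℓ1] : (0:ℝ) ≤ ℓ - 1) hlogE]
      have h4 : ℓ + ℓ * Real.log (2 + 3*Real.log M) = ℓ * (1 + Real.log (2 + 3*Real.log M)) := by
        ring
      linarith only [h2, h3, h4]
    have hbLc : Real.log Lc ≤ ℓ * (1 + Real.log (2 + 3*Real.log M)) :=
      hbound Lc hLc0 (by linarith)
    have hbLd : Real.log Ld ≤ ℓ * (1 + Real.log (2 + 3*Real.log M)) :=
      hbound Ld hLd0 hLdb
    have h1 : Real.log a' - Real.log a
        = (Real.log b - Real.log a) + (1/(α-2)) * Real.log Lc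
          + (Ld - Lc) + (1/(2-β)) * Real.log Ld := by
      rw [hloga']; linarith [hlogb]
    rw [h1]
    have u1 : Real.log b - Real.log a ≤ Real.log M := by linarith
    have u2 : Ld - Lc ≤ Real.log M := by linarith
    have u3 : (1/(α-2)) * Real.log Lc ≤ (1/(α-2)) * (ℓ * (1 + Real.log (2 + 3*Real.log M))) :=
      mul_le_mul_of_nonneg_left hbLc (by positivity)
    have u4 : (1/(2-β)) * Real.log Ld ≤ (1/(2-β)) * (ℓ * (1 + Real.log (2 + 3*Real.log M))) :=
      mul_le_mul_of_nonneg_left hbLd (by positivity)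
    have hℓ1 : 1 ≤ ℓ := hℓ
    have hMℓ : 2*Real.log M ≤ 2*Real.log M * ℓ := by
      nlinarith only [mul_nonneg hlogM (by linarith only [hℓ1] : (0:ℝ) ≤ ℓ - 1)]
    have hRHS : (2*Real.log M + (1/(α-2) + 1/(2-β)) * (1 + Real.log (2 + 3*Real.log M))) * ℓ
        = 2*Real.log M * ℓ + (1/(α-2)) * (ℓ * (1 + Real.log (2 + 3*Real.log M)))
          + (1/(2-β)) * (ℓ * (1 + Real.log (2 + 3*Real.log M))) := by ring
    linarith only [u1, u2, u3, u4, hMℓ, hRHS]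



lemma fmono {x y : ℝ} (hx : Real.exp 1 ≤ x) (hxy : x ≤ y) :
    x / Real.log x ≤ y / Real.log y := by
  have hy : Real.exp 1 ≤ y := le_trans hx hxy
  have h := Real.log_div_self_antitoneOn (by exact hx) (by exact hy) hxy
  have hx0 : 0 < x := lt_of_lt_of_le (Real.exp_pos 1) hx
  have hy0 : 0 < y := lt_of_lt_of_le (Real.exp_pos 1) hy
  have hlx : 1 ≤ Real.log x := by
    rw [show (1:ℝ) = Real.log (Real.exp 1) by rw [Real.log_exp]]
    exact Real.log_le_log (Real.exp_pos 1) hx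
  have hly : 1 ≤ Real.log y := by
    rw [show (1:ℝ) = Real.log (Real.exp 1) by rw [Real.log_exp]]
    exact Real.log_le_log (Real.exp_pos 1) hy
  have hpy : 0 < Real.log y / y := by positivity
  have h2 := one_div_le_one_div_of_le hpy h
  rwa [one_div_div, one_div_div] at h2

lemma fstep_up {t t' : ℝ} (h1 : 1 ≤ Real.log t) (h0 : 0 < t) (htt : t ≤ t') :
    t' / Real.log t' - t / Real.log t ≤ (t' - t) / Real.log t := by
  have hlt : Real.log t ≤ Real.log t' := Real.log_le_log h0 htt
  have h1' : 0 < Real.log t := by linarith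
  have h2 : t' / Real.log t' ≤ t' / Real.log t := by
    apply div_le_div_of_nonneg_left (by linarith) h1' hlt
  have h3 : t' / Real.log t - t / Real.log t = (t' - t) / Real.log t := by
    rw [div_sub_div_same]
  linarith [h2, h3.ge, h3.le]

lemma fstep_low {t t' : ℝ} (h0 : 0 < t) (h2 : 2 ≤ Real.log t) (htt : t ≤ t')
    (hll : Real.log t' ≤ 2 * Real.log t) :
    (t' - t) / (4 * Real.log t) ≤ t' / Real.log t' - t / Real.log t := by
  set l := Real.log t with hl
  set l' := Real.log t' with hl'
  have hl0 : 0 < l := by linarith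
  have hll' : l ≤ l' := Real.log_le_log h0 htt
  have hl'0 : 0 < l' := by linarith
  have ht'0 : 0 < t' := lt_of_lt_of_le h0 htt
  have hΔ0 : 0 ≤ t' - t := by linarith
  -- l' - l ≤ (t' - t)/t, so t*(l'-l) ≤ t'-t
  have hsub : t * (l' - l) ≤ t' - t := by
    have hd : l' - l = Real.log (t'/t) := by
      rw [hl, hl', Real.log_div (ne_of_gt ht'0) (ne_of_gt h0)]
    have hd2 : Real.log (t'/t) ≤ t'/t - 1 := Real.log_le_sub_one_of_pos (by positivity)
    have hd3 : t * (t'/t - 1) = t' - t := by field_simp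
    calc t * (l' - l) = t * Real.log (t'/t) := by rw [hd]
      _ ≤ t * (t'/t - 1) := by apply mul_le_mul_of_nonneg_left hd2 h0.le
      _ = t' - t := hd3
  have hkey : t' / l' - t / l = (t'*l - t*l') / (l*l') := by
    field_simp
  have hnum : (t'-t) * (l - 1) ≤ t'*l - t*l' := by nlinarith only [hsub]
  have hstep : (t'-t) / (4*l) ≤ ((t'-t)*(l-1)) / (l*l') := by
    rw [div_le_div_iff₀ (by positivity) (by positivity)]
    nlinarith only [mul_nonneg (mul_nonneg hΔ0 hl0.le) (by linarith : (0:ℝ) ≤ l - 2),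
      mul_nonneg (mul_nonneg hΔ0 hl0.le) (by linarith : (0:ℝ) ≤ 2*l - l')]
  have hstep2 : ((t'-t)*(l-1)) / (l*l') ≤ (t'*l - t*l') / (l*l') := by
    exact div_le_div_of_nonneg_right hnum (by positivity)
  linarith [hkey.le, hkey.ge]
set_option maxHeartbeats 2000000 in
/-- Lemma 3.1 of the paper: under the additional comparability
`b_k ≤ M·a_k`, `d_k ≤ M·c_k` (condition (3.14)), if `a_1` is large enough then
`h(r) ≃ log r / log log r` for large `r`. -/
theorem stmt_12 (α β M : ℝ) (hα : 2 < α) (hβ0 : 0 < β) (hβ2 : β < 2) (hM : 1 ≤ M) :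
    ∃ R : ℝ, Real.exp 2 < R ∧
      ∀ (A B Cs D : ℕ → ℝ) (V h : ℝ → ℝ),
        Real.exp 2 < A 1 → R ≤ A 1 →
        (∀ k ≥ 1, A k ≤ B k ∧ B k < Cs k ∧ Cs k ≤ D k ∧ D k < A (k + 1)) →
        (∀ k ≥ 1, B k = Cs k / Real.log (Cs k) ^ ((1:ℝ) / (α - 2))) →
        (∀ k ≥ 1, A (k + 1) = D k * Real.log (D k) ^ ((1:ℝ) / (2 - β))) →
        (∀ r : ℝ, 0 < r → r < A 1 → V r = 2 * Real.pi * r ^ 2) →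
        (∀ k ≥ 1, ∀ r : ℝ, A k ≤ r → r < B k → V r = 2 * Real.pi * r ^ 2) →
        (∀ k ≥ 1, ∀ r : ℝ, B k ≤ r → r < Cs k →
          V r = 2 * Real.pi * (r / B k) ^ α * B k ^ 2) →
        (∀ k ≥ 1, ∀ r : ℝ, Cs k ≤ r → r < D k →
          V r = 2 * Real.pi * r ^ 2 * Real.log r) →
        (∀ k ≥ 1, ∀ r : ℝ, D k ≤ r → r < A (k + 1) →
          V r = 2 * Real.pi * (r / D k) ^ β * D k ^ 2 * Real.log (D k)) →
        (∀ r : ℝ, 1 ≤ r → h r = 1 + ∫ s in (1:ℝ)..r, s / V s) →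
        (∀ k ≥ 1, B k ≤ M * A k) →
        (∀ k ≥ 1, D k ≤ M * Cs k) →
        ∃ c C r₀ : ℝ, 0 < c ∧ c ≤ C ∧ Real.exp 1 < r₀ ∧
          ∀ r ≥ r₀,
            c * (Real.log r / Real.log (Real.log r)) ≤ h r ∧
            h r ≤ C * (Real.log r / Real.log (Real.log r)) := by
  have hπ : (0:ℝ) < π := Real.pi_pos
  have hα2 : (0:ℝ) < α - 2 := by linarith
  have h2β : (0:ℝ) < 2 - β := by linarith
  have hlogM : 0 ≤ Real.log M := Real.log_nonneg hM
  set K4 : ℝ := 2*Real.log M + (1/(α-2) + 1/(2-β)) * (1 + Real.log (2 + 3*Real.log M))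
    with hK4def
  have hlogE : 0 ≤ Real.log (2 + 3*Real.log M) := Real.log_nonneg (by linarith)
  have hK4pos : 0 < K4 := by
    have h1 : (0:ℝ) < 1/(α-2) + 1/(2-β) := by positivity
    rw [hK4def]
    nlinarith only [h1, hlogM, hlogE]
  set KB : ℝ := 2 + Real.log (1 + K4) + (4/(α-2))^2 with hKBdef
  have hlogK4 : 0 ≤ Real.log (1 + K4) := Real.log_nonneg (by linarith)
  have hθ0 : (0:ℝ) ≤ (4/(α-2))^2 := sq_nonneg _
  have hKB2 : 2 ≤ KB := by rw [hKBdef]; linarith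
  have hKBlogK4 : Real.log (1 + K4) ≤ KB := by rw [hKBdef]; linarith
  have hKBθ : (4/(α-2))^2 ≤ KB := by rw [hKBdef]; linarith
  have hKBexp : KB + 1 ≤ Real.exp KB := Real.add_one_le_exp KB
  refine ⟨Real.exp (Real.exp KB), Real.exp_lt_exp.2 (by linarith), ?_⟩
  intro A B Cs D V h hA1e hRA1 hchain hbdef hadef hV0 hVa hVb hVc hVd hh hbM hdM
  have he2gt1 : (1:ℝ) < Real.exp 2 := by
    calc (1:ℝ) = Real.exp 0 := (Real.exp_zero).symm
    _ < Real.exp 2 := Real.exp_lt_exp.2 (by norm_num)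
  have he2gt7 : (7:ℝ) < Real.exp 2 := by
    have h1 : Real.exp 2 = Real.exp 1 * Real.exp 1 := by
      rw [← Real.exp_add]; norm_num
    nlinarith only [h1, Real.exp_one_gt_d9]
  have hM0 : (0:ℝ) < M := lt_of_lt_of_le one_pos hM
  -- A k > e^2 for all k ≥ 1
  have hAk : ∀ k, 1 ≤ k → Real.exp 2 < A k := by
    intro k hk
    induction k, hk using Nat.le_induction with
    | base => exact hA1e
    | succ n hn ih =>
      obtain ⟨h1, h2, h3, h4⟩ := hchain n hn
      linarith
  -- basic block facts
  have hfacts : ∀ k, 1 ≤ k →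
      0 < A k ∧ 0 < B k ∧ 0 < Cs k ∧ 0 < D k ∧
      2 ≤ Real.log (Cs k) ∧ 2 ≤ Real.log (D k) := by
    intro k hk
    obtain ⟨h1, h2, h3, h4⟩ := hchain k hk
    have hak := hAk k hk
    have ha0 : 0 < A k := lt_trans (lt_trans one_pos he2gt1) hak
    have hb0 : 0 < B k := lt_of_lt_of_le ha0 h1
    have hc0 : 0 < Cs k := lt_trans hb0 h2
    have hd0 : 0 < D k := lt_of_lt_of_le hc0 h3
    have hc2 : Real.exp 2 < Cs k := lt_of_le_of_lt h1 h2 |>.trans_le' hak.le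
    refine ⟨ha0, hb0, hc0, hd0, ?_, ?_⟩
    · rw [show (2:ℝ) = Real.log (Real.exp 2) by rw [Real.log_exp]]
      exact Real.log_le_log (Real.exp_pos 2) hc2.le
    · rw [show (2:ℝ) = Real.log (Real.exp 2) by rw [Real.log_exp]]
      exact Real.log_le_log (Real.exp_pos 2) (le_trans hc2.le h3)
  -- step growth: A k + 1 ≤ A (k+1)
  have hstep1 : ∀ k, 1 ≤ k → A k + 1 ≤ A (k+1) := by
    intro k hk
    obtain ⟨h1, h2, h3, h4⟩ := hchain k hk
    obtain ⟨ha0, hb0, hc0, hd0, hLc2, hLd2⟩ := hfacts k hk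
    have hrp : (5/4 : ℝ) ≤ Real.log (D k) ^ ((1:ℝ)/(2-β)) := by
      have b1 : ((2:ℝ))^((1:ℝ)/2) ≤ ((2:ℝ))^((1:ℝ)/(2-β)) := by
        apply Real.rpow_le_rpow_of_exponent_le one_le_two
        apply one_div_le_one_div_of_le h2β (by linarith)
      have b2 : ((2:ℝ))^((1:ℝ)/(2-β)) ≤ Real.log (D k) ^ ((1:ℝ)/(2-β)) :=
        Real.rpow_le_rpow (by norm_num) hLd2 (by positivity)
      have b3 : (5/4:ℝ) ≤ ((2:ℝ))^((1:ℝ)/2) := by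
        rw [show ((2:ℝ))^((1:ℝ)/2) = Real.sqrt 2 by
          rw [Real.sqrt_eq_rpow]]
        rw [show (5/4 : ℝ) = Real.sqrt ((5/4)^2) by rw [Real.sqrt_sq (by norm_num)]]
        apply Real.sqrt_le_sqrt; norm_num
      linarith
    have hDk2 : Real.exp 2 < D k := by
      have := hAk k hk; linarith
    have ha' : A (k+1) = D k * Real.log (D k) ^ ((1:ℝ)/(2-β)) := hadef k hk
    have h5 : D k * (5/4 : ℝ) ≤ A (k+1) := by
      rw [ha']
      exact mul_le_mul_of_nonneg_left hrp hd0.le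
    nlinarith only [h5, hDk2, he2gt7, h1, h2, h3]
  have hmono : ∀ j k, 1 ≤ j → j ≤ k → A j ≤ A k := by
    intro j k hj hjk
    induction k, hjk using Nat.le_induction with
    | base => exact le_refl _
    | succ n hn ih =>
      have := hstep1 n (le_trans hj hn)
      linarith
  have hgrow : ∀ k : ℕ, 1 ≤ k → A 1 + (k:ℝ) - 1 ≤ A k := by
    intro k hk
    induction k, hk using Nat.le_induction with
    | base => norm_num
    | succ n hn ih =>
      have := hstep1 n hn
      push_cast
      push_cast at ih
      linarith
  -- V at points A k
  have hVA : ∀ k, 1 ≤ k → V (A k) = 2 * Real.pi * (A k)^2 := by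
    intro k hk
    obtain ⟨h1, h2, h3, h4⟩ := hchain k hk
    obtain ⟨ha0, hb0, hc0, hd0, hLc2, hLd2⟩ := hfacts k hk
    rcases lt_or_eq_of_le h1 with hlt | heq
    · exact hVa k hk (A k) (le_refl _) hlt
    · rw [hVb k hk (A k) heq.ge (heq ▸ h2), ← heq,
        div_self (ne_of_gt ha0), Real.one_rpow, mul_one]
  -- V on Icc 1 (A 1)
  have hIcc1 : ∀ s ∈ Set.Icc (1:ℝ) (A 1), V s = 2 * Real.pi * s^2 := by
    intro s hs
    rcases lt_or_eq_of_le hs.2 with hlt | heq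
    · exact hV0 s (lt_of_lt_of_le one_pos hs.1) hlt
    · rw [heq]; exact hVA 1 le_rfl
  -- V on Icc (A k) (B k)
  have hIccq : ∀ k, 1 ≤ k → ∀ s ∈ Set.Icc (A k) (B k), V s = 2 * Real.pi * s^2 := by
    intro k hk s hs
    obtain ⟨h1, h2, h3, h4⟩ := hchain k hk
    obtain ⟨ha0, hb0, hc0, hd0, hLc2, hLd2⟩ := hfacts k hk
    rcases lt_or_eq_of_le hs.2 with hlt | heq
    · exact hVa k hk s hs.1 hlt
    · rw [heq, hVb k hk (B k) (le_refl _) h2,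
        div_self (ne_of_gt hb0), Real.one_rpow, mul_one]
  -- V at Cs k
  have hVCs : ∀ k, 1 ≤ k → V (Cs k) = 2 * Real.pi * (Cs k)^2 * Real.log (Cs k) := by
    intro k hk
    obtain ⟨h1, h2, h3, h4⟩ := hchain k hk
    obtain ⟨ha0, hb0, hc0, hd0, hLc2, hLd2⟩ := hfacts k hk
    rcases lt_or_eq_of_le h3 with hlt | heq
    · exact hVc k hk (Cs k) (le_refl _) hlt
    · rw [hVd k hk (Cs k) heq.ge (heq ▸ h4), ← heq,
        div_self (ne_of_gt hc0), Real.one_rpow, mul_one]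
  -- V on Icc (B k) (Cs k)
  have hIccα : ∀ k, 1 ≤ k → ∀ s ∈ Set.Icc (B k) (Cs k),
      V s = (2 * Real.pi * (B k)^((2:ℝ)-α)) * s^α := by
    intro k hk s hs
    obtain ⟨h1, h2, h3, h4⟩ := hchain k hk
    obtain ⟨ha0, hb0, hc0, hd0, hLc2, hLd2⟩ := hfacts k hk
    have hLc0 : (0:ℝ) < Real.log (Cs k) := by linarith
    have hbα : (0:ℝ) < (B k)^α := Real.rpow_pos_of_pos hb0 α
    rcases lt_or_eq_of_le hs.2 with hlt | heq
    · have hs0 : 0 < s := lt_of_lt_of_le hb0 hs.1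
      rw [hVb k hk s hs.1 hlt, Real.div_rpow hs0.le hb0.le, Real.rpow_sub hb0,
        Real.rpow_two]
      field_simp
    · rw [heq, hVCs k hk]
      have hbq : (B k)^((2:ℝ)-α) = (Cs k)^((2:ℝ)-α) * Real.log (Cs k) := by
        rw [hbdef k hk, Real.div_rpow hc0.le (Real.rpow_nonneg hLc0.le _),
          ← Real.rpow_mul hLc0.le,
          show (1:ℝ)/(α-2)*((2:ℝ)-α) = -1 by
            rw [div_mul_eq_mul_div, one_mul, div_eq_iff (ne_of_gt hα2)]; ring,
          Real.rpow_neg_one, div_inv_eq_mul]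
      have hcc : (Cs k)^((2:ℝ)-α) * (Cs k)^α = (Cs k)^2 := by
        rw [← Real.rpow_add hc0, sub_add_cancel, Real.rpow_two]
      rw [hbq, show 2 * Real.pi * ((Cs k)^((2:ℝ)-α) * Real.log (Cs k)) * (Cs k)^α
        = 2 * Real.pi * Real.log (Cs k) * ((Cs k)^((2:ℝ)-α) * (Cs k)^α) by ring, hcc]
      ring
  -- V on Icc (Cs k) (D k)
  have hIccl : ∀ k, 1 ≤ k → ∀ s ∈ Set.Icc (Cs k) (D k),
      V s = 2 * Real.pi * s^2 * Real.log s := by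
    intro k hk s hs
    obtain ⟨h1, h2, h3, h4⟩ := hchain k hk
    obtain ⟨ha0, hb0, hc0, hd0, hLc2, hLd2⟩ := hfacts k hk
    rcases lt_or_eq_of_le hs.2 with hlt | heq
    · exact hVc k hk s hs.1 hlt
    · rw [heq, hVd k hk (D k) (le_refl _) h4,
        div_self (ne_of_gt hd0), Real.one_rpow, mul_one]
  -- auxiliary: (A (k+1))^{2-β} = (D k)^{2-β} log (D k)
  have haL : ∀ k, 1 ≤ k →
      (A (k+1))^((2:ℝ)-β) = (D k)^((2:ℝ)-β) * Real.log (D k) := by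
    intro k hk
    obtain ⟨ha0, hb0, hc0, hd0, hLc2, hLd2⟩ := hfacts k hk
    have hLd0 : (0:ℝ) ≤ Real.log (D k) := by linarith
    rw [hadef k hk, Real.mul_rpow hd0.le (Real.rpow_nonneg hLd0 _),
      ← Real.rpow_mul hLd0, one_div, inv_mul_cancel₀ (ne_of_gt h2β), Real.rpow_one]
  -- V on Icc (D k) (A (k+1))
  have hIccβ : ∀ k, 1 ≤ k → ∀ s ∈ Set.Icc (D k) (A (k+1)),
      V s = (2 * Real.pi * (D k)^((2:ℝ)-β) * Real.log (D k)) * s^β := by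
    intro k hk s hs
    obtain ⟨h1, h2, h3, h4⟩ := hchain k hk
    obtain ⟨ha0, hb0, hc0, hd0, hLc2, hLd2⟩ := hfacts k hk
    have hdβ : (0:ℝ) < (D k)^β := Real.rpow_pos_of_pos hd0 β
    rcases lt_or_eq_of_le hs.2 with hlt | heq
    · have hs0 : 0 < s := lt_of_lt_of_le hd0 hs.1
      rw [hVd k hk s hs.1 hlt, Real.div_rpow hs0.le hd0.le, Real.rpow_sub hd0,
        Real.rpow_two]
      field_simp
    · have ha'0 : 0 < A (k+1) := lt_of_lt_of_le hd0 (le_of_lt h4)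
      have hcc : (A (k+1))^((2:ℝ)-β) * (A (k+1))^β = (A (k+1))^2 := by
        rw [← Real.rpow_add ha'0, sub_add_cancel, Real.rpow_two]
      rw [heq, hVA (k+1) (by omega), show
        2 * Real.pi * (D k)^((2:ℝ)-β) * Real.log (D k) * (A (k+1))^β
        = 2 * Real.pi * ((D k)^((2:ℝ)-β) * Real.log (D k)) * (A (k+1))^β by ring,
        ← haL k hk, show
        2 * Real.pi * ((A (k+1))^((2:ℝ)-β)) * (A (k+1))^β
        = 2 * Real.pi * ((A (k+1))^((2:ℝ)-β) * (A (k+1))^β) by ring, hcc]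
  -- blocks
  have hblock : ∀ k, 1 ≤ k →
      IntervalIntegrable (fun s => s / V s) volume (A k) (A (k+1)) ∧
      1/(4*π*(2-β)) ≤ (∫ s in (A k)..(A (k+1)), s / V s) ∧
      (∫ s in (A k)..(A (k+1)), s / V s) ≤
        (Real.log M)/(2*π) + 1/(2*π*(α-2)) + (Real.log M)/(4*π) + 1/(2*π*(2-β)) := by
    intro k hk
    obtain ⟨h1, h2, h3, h4⟩ := hchain k hk
    exact block_lemma hα hβ2 hM (hAk k hk) h1 h2 h3 h4 (hbM k hk) (hdM k hk)
      (hadef k hk) (hIccq k hk) (hIccα k hk) (hIccl k hk) (hIccβ k hk)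
  have hA1gt1 : (1:ℝ) < A 1 := lt_trans he2gt1 hA1e
  have hI0 := quad_piece one_pos hA1gt1.le hIcc1
  have hI0val : (∫ s in (1:ℝ)..(A 1), s / V s) = Real.log (A 1) / (2*π) := by
    rw [hI0.2, Real.log_one, sub_zero]
  set P : ℝ := 1/(4*π*(2-β)) with hPdef
  set Q : ℝ := (Real.log M)/(2*π) + 1/(2*π*(α-2)) + (Real.log M)/(4*π) + 1/(2*π*(2-β))
    with hQdef
  have hP0 : 0 < P := by rw [hPdef]; positivity
  have hQ0 : 0 < Q := by rw [hQdef]; positivity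
  -- cumulative integrability and h bounds at A n
  have hcum : ∀ n, 1 ≤ n → IntervalIntegrable (fun s => s / V s) volume 1 (A n) ∧
      h (A n) ≤ 1 + Real.log (A 1)/(2*π) + ((n:ℝ)-1)*Q ∧
      1 + ((n:ℝ)-1)*P ≤ h (A n) := by
    intro n hn
    induction n, hn using Nat.le_induction with
    | base =>
      refine ⟨hI0.1, ?_, ?_⟩
      · rw [hh (A 1) hA1gt1.le, hI0val]; push_cast; linarith
      · rw [hh (A 1) hA1gt1.le, hI0val]
        push_cast
        have : 0 ≤ Real.log (A 1) := Real.log_nonneg hA1gt1.le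
        have h2π : 0 < 2*π := by positivity
        have := div_nonneg this h2π.le
        linarith
    | succ n hn ih =>
      obtain ⟨ih1, ih2, ih3⟩ := ih
      obtain ⟨hb1, hb2, hb3⟩ := hblock n hn
      have hsplit := integral_add_adjacent_intervals ih1 hb1
      have hAn1 : (1:ℝ) ≤ A n := le_trans hA1gt1.le (hmono 1 n le_rfl hn)
      have hAn1' : (1:ℝ) ≤ A (n+1) :=
        le_trans hA1gt1.le (hmono 1 (n+1) le_rfl (by omega))
      have hval : h (A (n+1)) = h (A n) + ∫ s in (A n)..(A (n+1)), s / V s := by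
        rw [hh (A (n+1)) hAn1', hh (A n) hAn1, ← hsplit]; ring
      refine ⟨ih1.trans hb1, ?_, ?_⟩
      · rw [hval]; push_cast; linarith
      · rw [hval]; push_cast; linarith
  -- nonnegativity of the integrand on blocks
  have hfpos : ∀ k, 1 ≤ k → ∀ u ∈ Set.Icc (A k) (A (k+1)), 0 ≤ u / V u := by
    intro k hk u hu
    obtain ⟨h1, h2, h3, h4⟩ := hchain k hk
    obtain ⟨ha0, hb0, hc0, hd0, hLc2, hLd2⟩ := hfacts k hk
    have hu0 : 0 < u := lt_of_lt_of_le ha0 hu.1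
    have hVu : 0 < V u := by
      rcases le_total u (B k) with hub | hub
      · rw [hIccq k hk u ⟨hu.1, hub⟩]; positivity
      rcases le_total u (Cs k) with huc | huc
      · rw [hIccα k hk u ⟨hub, huc⟩]
        have : (0:ℝ) < (B k)^((2:ℝ)-α) := Real.rpow_pos_of_pos hb0 _
        positivity
      rcases le_total u (D k) with hud | hud
      · rw [hIccl k hk u ⟨huc, hud⟩]
        have hu1 : (1:ℝ) < u := lt_of_lt_of_le (lt_trans he2gt1 (hAk k hk)) (le_trans (le_trans h1 h2.le) huc)
        have : 0 < Real.log u := Real.log_pos hu1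
        positivity
      · rw [hIccβ k hk u ⟨hud, hu.2⟩]
        have hd' : (0:ℝ) < (D k)^((2:ℝ)-β) := Real.rpow_pos_of_pos hd0 _
        have hLd : (0:ℝ) < Real.log (D k) := by linarith
        have : (0:ℝ) < u^β := Real.rpow_pos_of_pos hu0 _
        positivity
    positivity
  -- locating r between consecutive A's
  have hfind : ∀ m : ℕ, ∀ r : ℝ, A 1 ≤ r → r < A (m+1) →
      ∃ N, 1 ≤ N ∧ A N ≤ r ∧ r < A (N+1) := by
    intro m
    induction m with
    | zero => intro r h1 h2; exact absurd h2 (not_lt.2 h1)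
    | succ m ih =>
      intro r h1 h2
      by_cases hc : r < A (m+1)
      · exact ih r h1 hc
      · exact ⟨m+1, by omega, not_lt.1 hc, h2⟩
  have hexists : ∀ r : ℝ, A 1 ≤ r → ∃ N, 1 ≤ N ∧ A N ≤ r ∧ r < A (N+1) := by
    intro r hr
    obtain ⟨m, hm⟩ := exists_nat_gt r
    have hA10 : 0 < A 1 := lt_trans one_pos hA1gt1
    have hg := hgrow (m+1) (by omega)
    have : r < A (m+1) := by push_cast at hg; linarith
    exact hfind m r hr this
  -- log-scale facts
  have hTk : ∀ k, 1 ≤ k → Real.exp KB ≤ Real.log (A k) := by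
    intro k hk
    have h1 : Real.exp (Real.exp KB) ≤ A k := le_trans hRA1 (hmono 1 k le_rfl hk)
    calc Real.exp KB = Real.log (Real.exp (Real.exp KB)) := (Real.log_exp _).symm
      _ ≤ Real.log (A k) := Real.log_le_log (Real.exp_pos _) h1
  have hlk : ∀ k, 1 ≤ k → KB ≤ Real.log (Real.log (A k)) := by
    intro k hk
    calc KB = Real.log (Real.exp KB) := (Real.log_exp _).symm
      _ ≤ Real.log (Real.log (A k)) := Real.log_le_log (Real.exp_pos _) (hTk k hk)
  have hTpos : ∀ k, 1 ≤ k → 0 < Real.log (A k) := fun k hk =>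
    lt_of_lt_of_le (Real.exp_pos KB) (hTk k hk)
  have hTbig : ∀ k, 1 ≤ k → KB + 1 ≤ Real.log (A k) := fun k hk =>
    le_trans hKBexp (hTk k hk)
  have hA0 : ∀ k, 1 ≤ k → 0 < A k := fun k hk => (hfacts k hk).1
  have hTmono : ∀ k, 1 ≤ k → Real.log (A k) ≤ Real.log (A (k+1)) := fun k hk =>
    Real.log_le_log (hA0 k hk) (by linarith [hstep1 k hk])
  have hΔ : ∀ k, 1 ≤ k →
      (1/(α-2)) * Real.log (Real.log (A k)) ≤ Real.log (A (k+1)) - Real.log (A k) ∧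
      Real.log (A (k+1)) - Real.log (A k) ≤ K4 * Real.log (Real.log (A k)) := by
    intro k hk
    obtain ⟨h1, h2, h3, h4⟩ := hchain k hk
    have hres := logstep hα hβ0 hβ2 hM (hAk k hk) h1 h2 h3 h4 (hbM k hk) (hdM k hk)
      (hbdef k hk) (hadef k hk) (le_trans hKBθ (by linarith [hTbig k hk]))
      (by linarith [hlk k hk, hKB2])
    rw [hK4def]
    exact hres
  have hφup : ∀ k, 1 ≤ k →
      Real.log (A (k+1)) / Real.log (Real.log (A (k+1)))
        ≤ Real.log (A k) / Real.log (Real.log (A k)) + K4 := by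
    intro k hk
    have hT0 := hTpos k hk
    have hℓ1 : 1 ≤ Real.log (Real.log (A k)) := by linarith [hlk k hk, hKB2]
    have hℓpos : (0:ℝ) < Real.log (Real.log (A k)) := by linarith
    have hdiv : (Real.log (A (k+1)) - Real.log (A k)) / Real.log (Real.log (A k)) ≤ K4 := by
      rw [div_le_iff₀ hℓpos]
      exact (hΔ k hk).2
    linarith [fstep_up hℓ1 hT0 (hTmono k hk)]
  have hc1 : (0:ℝ) < 1/(α-2)/4 := by positivity
  have hφlow : ∀ k, 1 ≤ k →
      Real.log (A k) / Real.log (Real.log (A k)) + 1/(α-2)/4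
        ≤ Real.log (A (k+1)) / Real.log (Real.log (A (k+1))) := by
    intro k hk
    have hT0 := hTpos k hk
    have hℓKB := hlk k hk
    have hℓ2 : 2 ≤ Real.log (Real.log (A k)) := by linarith [hKB2]
    have hℓpos : (0:ℝ) < Real.log (Real.log (A k)) := by linarith
    have hll : Real.log (Real.log (A (k+1))) ≤ 2 * Real.log (Real.log (A k)) := by
      have h1 : Real.log (A (k+1)) ≤ (1 + K4) * Real.log (A k) := by
        have h2 := (hΔ k hk).2
        have h3 : Real.log (Real.log (A k)) ≤ Real.log (A k) :=
          Real.log_le_self hT0.le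
        nlinarith only [h2, h3, hK4pos, hT0]
      have h4 : Real.log (Real.log (A (k+1))) ≤ Real.log ((1 + K4) * Real.log (A k)) :=
        Real.log_le_log (hTpos (k+1) (by omega)) h1
      rw [Real.log_mul (by positivity : (1:ℝ) + K4 ≠ 0) (ne_of_gt hT0)] at h4
      linarith [hKBlogK4]
    have hfs := fstep_low hT0 hℓ2 (hTmono k hk) hll
    have hdiv : 1/(α-2)/4 ≤
        (Real.log (A (k+1)) - Real.log (A k)) / (4 * Real.log (Real.log (A k))) := by
      rw [le_div_iff₀ (by positivity)]
      linarith [(hΔ k hk).1]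
    linarith
  have hφub : ∀ n : ℕ, 1 ≤ n → Real.log (A n) / Real.log (Real.log (A n))
      ≤ Real.log (A 1) / Real.log (Real.log (A 1)) + ((n:ℝ)-1)*K4 := by
    intro n hn
    induction n, hn using Nat.le_induction with
    | base => push_cast; linarith
    | succ n hn ih =>
      have := hφup n hn
      push_cast
      push_cast at ih
      linarith
  have hφlb : ∀ n : ℕ, 1 ≤ n →
      Real.log (A 1) / Real.log (Real.log (A 1)) + ((n:ℝ)-1)*(1/(α-2)/4)
        ≤ Real.log (A n) / Real.log (Real.log (A n)) := by
    intro n hn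
    induction n, hn using Nat.le_induction with
    | base => push_cast; linarith
    | succ n hn ih =>
      have := hφlow n hn
      push_cast
      push_cast at ih
      linarith
  -- final constants
  set φ1 : ℝ := Real.log (A 1) / Real.log (Real.log (A 1)) with hφ1def
  have hT1pos : 0 < Real.log (A 1) := hTpos 1 le_rfl
  have hℓ1pos : 0 < Real.log (Real.log (A 1)) := by linarith [hlk 1 le_rfl, hKB2]
  have hφ1pos : 0 < φ1 := by rw [hφ1def]; positivity
  set W : ℝ := 1 + Real.log (A 1)/(2*π) + Q with hWdef
  have hW0 : 0 < W := by
    rw [hWdef]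
    have : 0 ≤ Real.log (A 1)/(2*π) := by positivity
    linarith
  set c1 : ℝ := 1/(α-2)/4 with hc1def
  set cc : ℝ := min 1 P / (2*(φ1 + K4)) with hccdef
  set CC : ℝ := W * (1/c1 + 1/φ1) with hCCdef
  have hmin0 : 0 < min 1 P := lt_min one_pos hP0
  have hcc0 : 0 < cc := by rw [hccdef]; positivity
  refine ⟨cc, max CC cc, A 1, hcc0, le_max_right _ _,
    lt_trans (Real.exp_lt_exp.2 one_lt_two) hA1e, ?_⟩
  intro r hr
  obtain ⟨N, hN1, hrN, hrN'⟩ := hexists r hr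
  have hA10 : 0 < A 1 := hA0 1 le_rfl
  have hr0 : 0 < r := lt_of_lt_of_le hA10 hr
  have h1r : (1:ℝ) ≤ r := le_trans hA1gt1.le hr
  have hAN1 : (1:ℝ) ≤ A N := le_trans hA1gt1.le (hmono 1 N le_rfl hN1)
  have hAN1' : (1:ℝ) ≤ A (N+1) := le_trans hA1gt1.le (hmono 1 (N+1) le_rfl (by omega))
  obtain ⟨hb1, hb2, hb3⟩ := hblock N hN1
  obtain ⟨hcum1, hcum2, hcum3⟩ := hcum N hN1
  have hANA : A N ≤ A (N+1) := by linarith [hstep1 N hN1]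
  have hsubl : Set.uIcc (A N) r ⊆ Set.uIcc (A N) (A (N+1)) := by
    rw [Set.uIcc_of_le hrN, Set.uIcc_of_le hANA]
    exact Set.Icc_subset_Icc le_rfl hrN'.le
  have hsubr : Set.uIcc r (A (N+1)) ⊆ Set.uIcc (A N) (A (N+1)) := by
    rw [Set.uIcc_of_le hrN'.le, Set.uIcc_of_le hANA]
    exact Set.Icc_subset_Icc hrN le_rfl
  have hintl : IntervalIntegrable (fun s => s / V s) volume (A N) r := hb1.mono_set hsubl
  have hintr : IntervalIntegrable (fun s => s / V s) volume r (A (N+1)) := hb1.mono_set hsubr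
  have hnnl : 0 ≤ ∫ s in (A N)..r, s / V s :=
    intervalIntegral.integral_nonneg hrN
      (fun u hu => hfpos N hN1 u ⟨hu.1, le_trans hu.2 hrN'.le⟩)
  have hnnr : 0 ≤ ∫ s in r..(A (N+1)), s / V s :=
    intervalIntegral.integral_nonneg hrN'.le
      (fun u hu => hfpos N hN1 u ⟨le_trans hrN hu.1, hu.2⟩)
  have hsplit1 := integral_add_adjacent_intervals hcum1 hintl
  have hsplit2 := integral_add_adjacent_intervals (hcum1.trans hintl) hintr
  have hhl : h (A N) ≤ h r := by
    rw [hh r h1r, hh (A N) hAN1, ← hsplit1]; linarith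
  have hhu : h r ≤ h (A (N+1)) := by
    rw [hh r h1r, hh (A (N+1)) hAN1', ← hsplit2]; linarith
  have hhrlow : 1 + ((N:ℝ)-1)*P ≤ h r := le_trans hcum3 hhl
  have hhrup : h r ≤ 1 + Real.log (A 1)/(2*π) + (N:ℝ)*Q := by
    have hc' := (hcum (N+1) (by omega)).2.1
    push_cast at hc'
    linarith [hhu]
  have heTN : Real.exp 1 ≤ Real.log (A N) := by
    have he1lt3 : Real.exp 1 < 3 := by nlinarith only [Real.exp_one_lt_d9]
    linarith [hTk N hN1, hKBexp, hKB2]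
  have hTNr : Real.log (A N) ≤ Real.log r := Real.log_le_log (hA0 N hN1) hrN
  have hrT' : Real.log r ≤ Real.log (A (N+1)) := Real.log_le_log hr0 hrN'.le
  have hglow : Real.log (A N) / Real.log (Real.log (A N))
      ≤ Real.log r / Real.log (Real.log r) := fmono heTN hTNr
  have hgup : Real.log r / Real.log (Real.log r)
      ≤ Real.log (A (N+1)) / Real.log (Real.log (A (N+1))) :=
    fmono (le_trans heTN hTNr) hrT'
  have hN1' : (1:ℝ) ≤ (N:ℝ) := by exact_mod_cast hN1
  have hgφ1 : φ1 ≤ Real.log r / Real.log (Real.log r) := by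
    have hp : 0 ≤ ((N:ℝ)-1)*c1 := mul_nonneg (by linarith) hc1.le
    linarith [hφlb N hN1, hglow, hp]
  have hgub : Real.log r / Real.log (Real.log r) ≤ φ1 + (N:ℝ)*K4 := by
    have hu' := hφub (N+1) (by omega)
    push_cast at hu'
    linarith [hgup]
  have hglb2 : φ1 + ((N:ℝ)-1)*c1 ≤ Real.log r / Real.log (Real.log r) := by
    linarith [hφlb N hN1, hglow]
  have hg0 : 0 ≤ Real.log r / Real.log (Real.log r) := le_trans hφ1pos.le hgφ1
  constructor
  · -- lower bound
    have hNg : Real.log r / Real.log (Real.log r) ≤ (N:ℝ)*(φ1 + K4) := by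
      nlinarith only [hgub, hφ1pos, hK4pos, hN1',
        mul_nonneg (by linarith : (0:ℝ) ≤ (N:ℝ)-1) hφ1pos.le]
    have e1 : cc * (Real.log r / Real.log (Real.log r)) ≤ cc * ((N:ℝ)*(φ1 + K4)) :=
      mul_le_mul_of_nonneg_left hNg hcc0.le
    have hne : φ1 + K4 ≠ 0 := by positivity
    have e2 : cc * ((N:ℝ)*(φ1 + K4)) = min 1 P * (N:ℝ) / 2 := by
      rw [hccdef]
      field_simp
    have e3 : min 1 P * (N:ℝ) / 2 ≤ 1 + ((N:ℝ)-1)*P := by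
      have m1 : min 1 P ≤ 1 := min_le_left _ _
      have m2 : min 1 P ≤ P := min_le_right _ _
      nlinarith only [m1, m2, hmin0, hP0, hN1',
        mul_le_mul_of_nonneg_right m2 (by linarith : (0:ℝ) ≤ (N:ℝ)-1),
        mul_nonneg hP0.le (by linarith : (0:ℝ) ≤ (N:ℝ)-1)]
    linarith
  · -- upper bound
    have hhW : h r ≤ (N:ℝ)*W := by
      rw [hWdef]
      have hlogA1 : 0 ≤ Real.log (A 1)/(2*π) := by positivity
      nlinarith only [hhrup, hN1', hQ0, hlogA1,
        mul_nonneg (by linarith : (0:ℝ) ≤ (N:ℝ)-1) hlogA1]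
    have hNle : (N:ℝ) ≤ (Real.log r / Real.log (Real.log r)) * (1/c1 + 1/φ1) := by
      have k1 : ((N:ℝ)-1) ≤ (Real.log r / Real.log (Real.log r)) / c1 := by
        rw [le_div_iff₀ hc1]
        nlinarith only [hglb2, hφ1pos]
      have k2 : (1:ℝ) ≤ (Real.log r / Real.log (Real.log r)) / φ1 := by
        rw [le_div_iff₀ hφ1pos]
        linarith [hgφ1]
      have k3 : (Real.log r / Real.log (Real.log r)) * (1/c1 + 1/φ1)
          = (Real.log r / Real.log (Real.log r)) / c1
            + (Real.log r / Real.log (Real.log r)) / φ1 := by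
        ring
      linarith
    have e1 : h r ≤ ((Real.log r / Real.log (Real.log r)) * (1/c1 + 1/φ1)) * W :=
      le_trans hhW (mul_le_mul_of_nonneg_right hNle hW0.le)
    have e2 : ((Real.log r / Real.log (Real.log r)) * (1/c1 + 1/φ1)) * W
        = CC * (Real.log r / Real.log (Real.log r)) := by rw [hCCdef]; ring
    have e3 : CC * (Real.log r / Real.log (Real.log r))
        ≤ max CC cc * (Real.log r / Real.log (Real.log r)) :=
      mul_le_mul_of_nonneg_right (le_max_left _ _) hg0
    linarith
end

section
/- Fix real numbers α > 2 and 0 < β < 2. Let (a_k), (b_k), (c_k), (d_k), k ≥ 1, be sequences of reals with e² < a_1 and a_k ≤ b_k < c_k ≤ d_k < a_{k+1} for all k, satisfying b_k = c_k/(log c_k)^{1/(α−2)} and a_{k+1} = d_k (log d_k)^{1/(2−β)}. Define V : (0,∞) → ℝ by V(r) = 2π r² if 0 < r < a_1 or a_k ≤ r < b_k for some k; V(r) = 2π (r/b_k)^α b_k² if b_k ≤ r < c_k; V(r) = 2π r² log r if c_k ≤ r < d_k; V(r) = 2π (r/d_k)^β d_k² log d_k if d_k ≤ r < a_{k+1}.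 Define h(r) = 1 + ∫_1^r s/V(s) ds for r ≥ 1. Assume in addition that there are δ > 1 and A ≥ 1 with b_k ≤ A·a_k and A^{−1}·c_k^δ ≤ d_k ≤ A·c_k^δ for all k. Then there exists R > e² such that if a_1 ≥ R, there are constants 0 < c ≤ C and r₀ > e such that for all r ≥ r₀: c·log(log r) ≤ h(r) ≤ C·log(log r). -/
open MeasureTheory intervalIntegral Real Set

lemma ae_ne_pt (y : ℝ) : ∀ᵐ s : ℝ, s ≠ y := by
  simpa [ae_iff] using (measure_singleton y : (volume : Measure ℝ) {y} = 0)

lemma integral_congr_Ico {f g : ℝ → ℝ} {x y : ℝ} (hxy : x ≤ y)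
    (h : ∀ s ∈ Set.Ico x y, f s = g s) : ∫ s in x..y, f s = ∫ s in x..y, g s := by
  apply intervalIntegral.integral_congr_ae
  filter_upwards [ae_ne_pt y] with s hs hmem
  rw [Set.uIoc_of_le hxy] at hmem
  exact h s ⟨hmem.1.le, lt_of_le_of_ne hmem.2 hs⟩

lemma integrable_congr_Ico {f g : ℝ → ℝ} {x y : ℝ} (hxy : x ≤ y)
    (h : ∀ s ∈ Set.Ico x y, f s = g s) (hg : IntervalIntegrable g volume x y) :
    IntervalIntegrable f volume x y := by
  apply hg.congr_ae
  rw [Filter.EventuallyEq, ae_restrict_iff' measurableSet_uIoc]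
  filter_upwards [ae_ne_pt y] with s hs hmem
  rw [Set.uIoc_of_le hxy] at hmem
  exact (h s ⟨hmem.1.le, lt_of_le_of_ne hmem.2 hs⟩).symm

lemma contOn_intInt {g : ℝ → ℝ} {x y : ℝ} (hxy : x ≤ y)
    (h : ContinuousOn g (Set.Icc x y)) : IntervalIntegrable g volume x y := by
  apply ContinuousOn.intervalIntegrable
  rwa [Set.uIcc_of_le hxy]

lemma evalA {x y : ℝ} (hx : 0 < x) (hxy : x ≤ y) :
    ∫ s in x..y, s / (2*π*s^2) = (Real.log y - Real.log x)/(2*π) := by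
  have h0 : (0:ℝ) ∉ Set.uIcc x y := by
    rw [Set.uIcc_of_le hxy]; rintro ⟨h1, h2⟩; linarith
  have hEq : Set.EqOn (fun s : ℝ => s / (2*π*s^2)) (fun s : ℝ => (2*π)⁻¹ * (1/s))
      (Set.uIcc x y) := by
    intro s hs
    rw [Set.uIcc_of_le hxy] at hs
    have hs0 : s ≠ 0 := ne_of_gt (lt_of_lt_of_le hx hs.1)
    field_simp
  rw [intervalIntegral.integral_congr hEq, intervalIntegral.integral_const_mul,
    integral_one_div h0, Real.log_div (by linarith) (ne_of_gt hx)]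
  ring

lemma evalB {x y b p : ℝ} (hb : 0 < b) (hx : 0 < x) (hxy : x ≤ y) (hp : 2 < p) :
    ∫ s in x..y, s / (2*π*(s/b)^p * b^2)
      = b^(p-2) * ((y^(2-p) - x^(2-p))/(2-p)) / (2*π) := by
  have h0 : (0:ℝ) ∉ Set.uIcc x y := by
    rw [Set.uIcc_of_le hxy]; rintro ⟨h1, h2⟩; linarith
  have hEq : Set.EqOn (fun s : ℝ => s / (2*π*(s/b)^p * b^2))
      (fun s : ℝ => (b^(p-2)/(2*π)) * s^((1:ℝ)-p)) (Set.uIcc x y) := by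
    intro s hs
    rw [Set.uIcc_of_le hxy] at hs
    have hs0 : 0 < s := lt_of_lt_of_le hx hs.1
    have h1 : (s/b)^p = s^p / b^p := Real.div_rpow hs0.le hb.le p
    have h2 : b^(p-2) = b^p / b^(2:ℝ) := Real.rpow_sub hb p 2
    have h3 : s^((1:ℝ)-p) = s^(1:ℝ) / s^p := Real.rpow_sub hs0 1 p
    have h4 : b^(2:ℝ) = b^2 := Real.rpow_two b
    have h5 : s^(1:ℝ) = s := Real.rpow_one s
    have hsp : s^p ≠ 0 := ne_of_gt (Real.rpow_pos_of_pos hs0 p)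
    have hbp : b^p ≠ 0 := ne_of_gt (Real.rpow_pos_of_pos hb p)
    have hπ : π ≠ 0 := Real.pi_ne_zero
    simp only [h1, h3, h5]
    rw [h2, h4]
    field_simp
  rw [intervalIntegral.integral_congr hEq, intervalIntegral.integral_const_mul,
    integral_rpow (Or.inr ⟨by intro hc; linarith [hc], h0⟩)]
  have : (1:ℝ) - p + 1 = 2 - p := by ring
  rw [this]
  ring

lemma evalC {x y : ℝ} (hx : 1 < x) (hxy : x ≤ y) :
    ∫ s in x..y, s / (2*π*s^2*Real.log s)
      = (Real.log (Real.log y) - Real.log (Real.log x))/(2*π) := by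
  have key : ∀ t ∈ Set.uIcc x y, HasDerivAt (fun s => (2*π)⁻¹ * Real.log (Real.log s))
      (t / (2*π*t^2*Real.log t)) t := by
    intro t ht
    rw [Set.uIcc_of_le hxy] at ht
    have ht1 : 1 < t := lt_of_lt_of_le hx ht.1
    have ht0 : t ≠ 0 := by linarith
    have hlt : Real.log t ≠ 0 := ne_of_gt (Real.log_pos ht1)
    have h1 : HasDerivAt (fun s : ℝ => Real.log (Real.log s)) ((Real.log t)⁻¹ * t⁻¹) t :=
      (Real.hasDerivAt_log hlt).comp t (Real.hasDerivAt_log ht0)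
    have h2 := h1.const_mul ((2*π)⁻¹)
    have heq : (2*π)⁻¹ * ((Real.log t)⁻¹ * t⁻¹) = t / (2*π*t^2*Real.log t) := by
      field_simp
    rwa [heq] at h2
  have hint : IntervalIntegrable (fun s : ℝ => s / (2*π*s^2*Real.log s)) volume x y := by
    apply ContinuousOn.intervalIntegrable
    rw [Set.uIcc_of_le hxy]
    apply ContinuousOn.div continuousOn_id
    · exact ((continuous_const.mul (continuous_pow 2)).continuousOn).mul
        (Real.continuousOn_log.mono (fun s hs => by
          simp only [Set.mem_compl_iff, Set.mem_singleton_iff]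
          intro h; rw [h] at hs; exact absurd hs.1 (by norm_num; linarith)))
    · intro s hs
      have hs1 : 1 < s := lt_of_lt_of_le hx hs.1
      have : 0 < 2*π*s^2*Real.log s := by
        have := Real.log_pos hs1
        have := Real.pi_pos
        positivity
      exact ne_of_gt this
  have := intervalIntegral.integral_eq_sub_of_hasDerivAt key hint
  rw [this]
  ring

lemma evalD {x y d lgd q : ℝ} (hd : 0 < d) (hld : 0 < lgd) (hx : 0 < x) (hxy : x ≤ y)
    (hq : q < 2) :
    ∫ s in x..y, s / (2*π*(s/d)^q * d^2 * lgd)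
      = d^(q-2) * ((y^(2-q) - x^(2-q))/(2-q)) / (2*π*lgd) := by
  have hEq : Set.EqOn (fun s : ℝ => s / (2*π*(s/d)^q * d^2 * lgd))
      (fun s : ℝ => (d^(q-2)/(2*π*lgd)) * s^((1:ℝ)-q)) (Set.uIcc x y) := by
    intro s hs
    rw [Set.uIcc_of_le hxy] at hs
    have hs0 : 0 < s := lt_of_lt_of_le hx hs.1
    have h1 : (s/d)^q = s^q / d^q := Real.div_rpow hs0.le hd.le q
    have h2 : d^(q-2) = d^q / d^(2:ℝ) := Real.rpow_sub hd q 2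
    have h3 : s^((1:ℝ)-q) = s^(1:ℝ) / s^q := Real.rpow_sub hs0 1 q
    have h4 : d^(2:ℝ) = d^2 := Real.rpow_two d
    have h5 : s^(1:ℝ) = s := Real.rpow_one s
    have hsp : s^q ≠ 0 := ne_of_gt (Real.rpow_pos_of_pos hs0 q)
    have hdp : d^q ≠ 0 := ne_of_gt (Real.rpow_pos_of_pos hd q)
    have hπ : π ≠ 0 := Real.pi_ne_zero
    simp only [h1, h3, h5]
    rw [h2, h4]
    field_simp
  rw [intervalIntegral.integral_congr hEq, intervalIntegral.integral_const_mul,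
    integral_rpow (Or.inl (by linarith))]
  have : (1:ℝ) - q + 1 = 2 - q := by ring
  rw [this]
  ring

lemma intgA {x y : ℝ} (hx : 0 < x) (hxy : x ≤ y) :
    IntervalIntegrable (fun s : ℝ => s/(2*π*s^2)) volume x y := by
  apply ContinuousOn.intervalIntegrable
  rw [Set.uIcc_of_le hxy]
  apply ContinuousOn.div continuousOn_id (by fun_prop)
  intro s hs
  have hs0 : 0 < s := lt_of_lt_of_le hx hs.1
  have := Real.pi_pos
  positivity

lemma intgB {x y b p : ℝ} (hb : 0 < b) (hx : 0 < x) (hxy : x ≤ y) :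
    IntervalIntegrable (fun s : ℝ => s/(2*π*(s/b)^p*b^2)) volume x y := by
  apply ContinuousOn.intervalIntegrable
  rw [Set.uIcc_of_le hxy]
  apply ContinuousOn.div continuousOn_id
  · apply ContinuousOn.mul _ continuousOn_const
    apply ContinuousOn.mul continuousOn_const
    exact (continuousOn_id.div_const b).rpow_const
      (fun s hs => Or.inl (ne_of_gt (div_pos (lt_of_lt_of_le hx hs.1) hb)))
  · intro s hs
    have hs0 : 0 < s := lt_of_lt_of_le hx hs.1
    have h1 : 0 < (s/b)^p := Real.rpow_pos_of_pos (div_pos hs0 hb) p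
    have := Real.pi_pos
    positivity

lemma intgC {x y : ℝ} (hx : 1 < x) (hxy : x ≤ y) :
    IntervalIntegrable (fun s : ℝ => s/(2*π*s^2*Real.log s)) volume x y := by
  apply ContinuousOn.intervalIntegrable
  rw [Set.uIcc_of_le hxy]
  apply ContinuousOn.div continuousOn_id
  · apply ContinuousOn.mul (by fun_prop)
    apply Real.continuousOn_log.mono
    intro s hs
    simp only [Set.mem_compl_iff, Set.mem_singleton_iff]
    have : 1 < s := lt_of_lt_of_le hx hs.1
    intro hc; rw [hc] at this; linarith
  · intro s hs
    have hs1 : 1 < s := lt_of_lt_of_le hx hs.1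
    have h1 : 0 < Real.log s := Real.log_pos hs1
    have hs0 : 0 < s := by linarith
    have := Real.pi_pos
    positivity

lemma intgD {x y d lgd q : ℝ} (hd : 0 < d) (hld : 0 < lgd) (hx : 0 < x) (hxy : x ≤ y) :
    IntervalIntegrable (fun s : ℝ => s/(2*π*(s/d)^q*d^2*lgd)) volume x y := by
  apply ContinuousOn.intervalIntegrable
  rw [Set.uIcc_of_le hxy]
  apply ContinuousOn.div continuousOn_id
  · apply ContinuousOn.mul _ continuousOn_const
    apply ContinuousOn.mul _ continuousOn_const
    apply ContinuousOn.mul continuousOn_const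
    exact (continuousOn_id.div_const d).rpow_const
      (fun s hs => Or.inl (ne_of_gt (div_pos (lt_of_lt_of_le hx hs.1) hd)))
  · intro s hs
    have hs0 : 0 < s := lt_of_lt_of_le hx hs.1
    have h1 : 0 < (s/d)^q := Real.rpow_pos_of_pos (div_pos hs0 hd) q
    have := Real.pi_pos
    positivity

lemma boundB {b c p : ℝ} (hb : 0 < b) (hbc : b ≤ c) (hp : 2 < p) :
    0 ≤ b^(p-2) * ((c^(2-p) - b^(2-p))/(2-p)) / (2*π) ∧
    b^(p-2) * ((c^(2-p) - b^(2-p))/(2-p)) / (2*π) ≤ (p-2)⁻¹/(2*π) := by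
  have hπ := Real.pi_pos
  have hc : 0 < c := lt_of_lt_of_le hb hbc
  set u : ℝ := (b/c)^(p-2) with hu
  have hu1 : u ≤ 1 := Real.rpow_le_one (by positivity) ((div_le_one hc).2 hbc) (by linarith)
  have hu0 : 0 < u := Real.rpow_pos_of_pos (div_pos hb hc) _
  have k1 : b^(p-2) * c^(2-p) = u := by
    rw [hu, Real.div_rpow hb.le hc.le]
    have : c^((2:ℝ)-p) = (c^(p-2))⁻¹ := by
      rw [show (2:ℝ)-p = -(p-2) by ring, Real.rpow_neg hc.le]
    rw [this]; ring
  have k2 : b^(p-2) * b^(2-p) = 1 := by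
    rw [← Real.rpow_add hb]; norm_num
  have key : b^(p-2) * ((c^(2-p) - b^(2-p))/(2-p)) = (1-u)/(p-2) := by
    have e1 : b^(p-2) * ((c^(2-p) - b^(2-p))/(2-p))
        = (b^(p-2)*c^(2-p) - b^(p-2)*b^(2-p))/(2-p) := by ring
    rw [e1, k1, k2, div_eq_div_iff (by linarith : (2:ℝ)-p ≠ 0) (by linarith : p-2 ≠ 0)]
    ring
  rw [key]
  have hnum : 0 ≤ (1-u)/(p-2) := div_nonneg (by linarith) (by linarith)
  constructor
  · positivity
  · gcongr
    rw [div_le_iff₀ (by linarith : (0:ℝ) < p-2), inv_mul_cancel₀ (by linarith : p-2 ≠ 0)]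
    linarith

lemma boundD {d lgd q : ℝ} (hd : 0 < d) (hld : 2 ≤ lgd) (hq : q < 2) :
    0 ≤ d^(q-2) * (((d*lgd^((1:ℝ)/(2-q)))^(2-q) - d^(2-q))/(2-q)) / (2*π*lgd) ∧
    d^(q-2) * (((d*lgd^((1:ℝ)/(2-q)))^(2-q) - d^(2-q))/(2-q)) / (2*π*lgd) ≤ (2-q)⁻¹/(2*π) := by
  have hπ := Real.pi_pos
  have hld0 : 0 < lgd := by linarith
  have h2q : (0:ℝ) < 2-q := by linarith
  have k0 : (lgd^((1:ℝ)/(2-q)))^(2-q) = lgd := by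
    rw [← Real.rpow_mul hld0.le, one_div, inv_mul_cancel₀ (ne_of_gt h2q), Real.rpow_one]
  have k1 : (d*lgd^((1:ℝ)/(2-q)))^(2-q) = d^(2-q) * lgd := by
    rw [Real.mul_rpow hd.le (Real.rpow_pos_of_pos hld0 _).le, k0]
  have k2 : d^(q-2) * d^(2-q) = 1 := by
    rw [← Real.rpow_add hd]; norm_num
  have key : d^(q-2) * (((d*lgd^((1:ℝ)/(2-q)))^(2-q) - d^(2-q))/(2-q)) = (lgd-1)/(2-q) := by
    rw [k1]
    field_simp
    nlinarith [k2]
  rw [key]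
  have hnum : 0 ≤ (lgd-1)/(2-q) := div_nonneg (by linarith) (by linarith)
  constructor
  · positivity
  · rw [div_div, div_le_div_iff₀ (by positivity) (by positivity)]
    have e : (2-q)⁻¹*((2-q)*(2*π*lgd)) = 2*π*lgd := by field_simp
    nlinarith [e, hπ]

set_option maxHeartbeats 4000000 in
/-- Lemma 3.2 of the paper: under the additional comparability
`b_k ≤ M·a_k`, `M⁻¹·c_k^δ ≤ d_k ≤ M·c_k^δ` with `δ > 1` (condition (3.22)),
if `a_1` is large enough then `h(r) ≃ log log r` for large `r`. -/
theorem stmt_15 (α β δ M : ℝ) (hα : 2 < α) (hβ0 : 0 < β) (hβ2 : β < 2)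
    (hδ : 1 < δ) (hM : 1 ≤ M) :
    ∃ R : ℝ, Real.exp 2 < R ∧
      ∀ (A B Cs D : ℕ → ℝ) (V h : ℝ → ℝ),
        Real.exp 2 < A 1 → R ≤ A 1 →
        (∀ k ≥ 1, A k ≤ B k ∧ B k < Cs k ∧ Cs k ≤ D k ∧ D k < A (k + 1)) →
        (∀ k ≥ 1, B k = Cs k / Real.log (Cs k) ^ ((1:ℝ) / (α - 2))) →
        (∀ k ≥ 1, A (k + 1) = D k * Real.log (D k) ^ ((1:ℝ) / (2 - β))) →
        (∀ r : ℝ, 0 < r → r < A 1 → V r = 2 * Real.pi * r ^ 2) →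
        (∀ k ≥ 1, ∀ r : ℝ, A k ≤ r → r < B k → V r = 2 * Real.pi * r ^ 2) →
        (∀ k ≥ 1, ∀ r : ℝ, B k ≤ r → r < Cs k →
          V r = 2 * Real.pi * (r / B k) ^ α * B k ^ 2) →
        (∀ k ≥ 1, ∀ r : ℝ, Cs k ≤ r → r < D k →
          V r = 2 * Real.pi * r ^ 2 * Real.log r) →
        (∀ k ≥ 1, ∀ r : ℝ, D k ≤ r → r < A (k + 1) →
          V r = 2 * Real.pi * (r / D k) ^ β * D k ^ 2 * Real.log (D k)) →
        (∀ r : ℝ, 1 ≤ r → h r = 1 + ∫ s in (1:ℝ)..r, s / V s) →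
        (∀ k ≥ 1, B k ≤ M * A k) →
        (∀ k ≥ 1, M⁻¹ * Cs k ^ δ ≤ D k ∧ D k ≤ M * Cs k ^ δ) →
        ∃ c C r₀ : ℝ, 0 < c ∧ c ≤ C ∧ Real.exp 1 < r₀ ∧
          ∀ r ≥ r₀,
            c * Real.log (Real.log r) ≤ h r ∧
            h r ≤ C * Real.log (Real.log r) := by
  classical
  have hπ : (0:ℝ) < π := Real.pi_pos
  have hα2 : (0:ℝ) < α - 2 := by linarith
  have h2β : (0:ℝ) < 2 - β := by linarith
  obtain ⟨Λ₀, hΛ₀⟩ : ∃ Λ₀ : ℝ, ∀ t : ℝ, Λ₀ ≤ t → Real.log t ≤ (α-2)/2 * t := by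
    have hle := Real.isLittleO_log_id_atTop.def (show (0:ℝ) < (α-2)/2 by linarith)
    rw [Filter.eventually_atTop] at hle
    obtain ⟨N, hN⟩ := hle
    refine ⟨max N 1, fun t ht => ?_⟩
    have h1 := hN t (le_trans (le_max_left _ _) ht)
    have ht1 : (1:ℝ) ≤ t := le_trans (le_max_right _ _) ht
    simp only [Real.norm_eq_abs, id_eq] at h1
    rw [abs_of_nonneg (by linarith : (0:ℝ) ≤ t)] at h1
    linarith [le_abs_self (Real.log t)]
  have hE1 : (2:ℝ) ≤ Real.exp 1 := by have := Real.add_one_le_exp 1; linarith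
  have hE2 : (4:ℝ) ≤ Real.exp 2 := by
    have h12 : Real.exp 2 = Real.exp 1 * Real.exp 1 := by
      rw [← Real.exp_add]; norm_num
    nlinarith
  set Λ : ℝ := max (max (Real.exp 2) Λ₀) (max (2*Real.log M/(δ-1)) (Real.log M)) with hΛdef
  have hΛe2 : Real.exp 2 ≤ Λ := le_trans (le_max_left _ _) (le_max_left _ _)
  have hΛ4 : (4:ℝ) ≤ Λ := le_trans hE2 hΛe2
  have hΛ0 : Λ₀ ≤ Λ := le_trans (le_max_right _ _) (le_max_left _ _)
  have hΛM : Real.log M ≤ Λ := le_trans (le_max_right _ _) (le_max_right _ _)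
  have hlogM : (0:ℝ) ≤ Real.log M := Real.log_nonneg hM
  have hΛδ : Real.log M ≤ (δ-1)*Λ/2 := by
    have h1 : 2*Real.log M/(δ-1) ≤ Λ := le_trans (le_max_left _ _) (le_max_right _ _)
    rw [div_le_iff₀ (by linarith : (0:ℝ) < δ-1)] at h1
    linarith
  refine ⟨Real.exp Λ, Real.exp_lt_exp.2 (by linarith), ?_⟩
  intro A B Cs D V h hA1e hA1R hchain hBdef hAdef hV0 hV1 hV2 hV3 hV4 hhdef hBM h322
  have hA1pos : (0:ℝ) < A 1 := lt_trans (Real.exp_pos 2) hA1e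
  have hA1_4 : (4:ℝ) < A 1 := lt_of_le_of_lt hE2 hA1e
  have hA1Λ : Λ ≤ Real.log (A 1) := by
    have h1 := Real.log_le_log (Real.exp_pos Λ) hA1R
    rwa [Real.log_exp] at h1
  have hmono : ∀ k, 1 ≤ k → A 1 ≤ A k := by
    intro k hk
    induction k, hk using Nat.le_induction with
    | base => exact le_refl _
    | succ n hn ih =>
      obtain ⟨h1, h2, h3, h4⟩ := hchain n hn
      linarith
  have hApos : ∀ k, 1 ≤ k → 0 < A k := fun k hk => lt_of_lt_of_le hA1pos (hmono k hk)
  have hAΛ : ∀ k, 1 ≤ k → Λ ≤ Real.log (A k) := fun k hk =>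
    le_trans hA1Λ (Real.log_le_log hA1pos (hmono k hk))
  have pk : ∀ k, 1 ≤ k → (0 < A k ∧ A k ≤ B k ∧ B k < Cs k ∧ Cs k ≤ D k ∧ D k < A (k+1)) ∧
      (Λ ≤ Real.log (A k) ∧ Λ ≤ Real.log (B k) ∧ Λ ≤ Real.log (Cs k) ∧ Λ ≤ Real.log (D k)) := by
    intro k hk
    obtain ⟨h1, h2, h3, h4⟩ := hchain k hk
    have ha := hApos k hk
    have hla := hAΛ k hk
    exact ⟨⟨ha, h1, h2, h3, h4⟩, hla,
      le_trans hla (Real.log_le_log ha h1),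
      le_trans hla (Real.log_le_log ha (by linarith)),
      le_trans hla (Real.log_le_log ha (by linarith))⟩
  set K₂ : ℝ := 5*δ*(1+1/(2-β)) with hK₂def
  have h1d2β : (0:ℝ) < 1/(2-β) := by positivity
  have hK₂5δ : 5*δ ≤ K₂ := by
    have hnn := mul_nonneg (by linarith : (0:ℝ) ≤ 5*δ) (le_of_lt h1d2β)
    rw [hK₂def]; linarith [hnn]
  have hK₂1 : (1:ℝ) < K₂ := by linarith
  set Γ₁ : ℝ := Real.log ((δ+1)/2) with hΓ₁def
  set Γ₂ : ℝ := Real.log K₂ with hΓ₂def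
  have hδ12 : (1:ℝ) < (δ+1)/2 := by linarith
  have hΓ₁pos : 0 < Γ₁ := Real.log_pos hδ12
  have hΓ₂pos : 0 < Γ₂ := Real.log_pos hK₂1
  have hΓ₁₂ : Γ₁ ≤ Γ₂ := Real.log_le_log (by linarith) (by linarith)
  set CU : ℝ := Real.log M + (α-2)⁻¹ + Γ₂ + (2-β)⁻¹ with hCUdef
  have hCUpos : 0 < CU := by
    have := inv_pos.2 hα2
    have := inv_pos.2 h2β
    rw [hCUdef]; linarith
  have logrel : ∀ k, 1 ≤ k →
      Real.log (B k) ≤ Real.log (A k) + Real.log M ∧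
      Real.log (Cs k) = Real.log (B k) + 1/(α-2) * Real.log (Real.log (Cs k)) ∧
      Real.log (A (k+1)) = Real.log (D k) + 1/(2-β) * Real.log (Real.log (D k)) ∧
      δ * Real.log (Cs k) - Real.log M ≤ Real.log (D k) ∧
      Real.log (D k) ≤ δ * Real.log (Cs k) + Real.log M := by
    intro k hk
    obtain ⟨⟨ha, h1, h2, h3, h4⟩, hla, hlb, hlc, hld⟩ := pk k hk
    have hb : 0 < B k := lt_of_lt_of_le ha h1
    have hc : 0 < Cs k := lt_trans hb h2
    have hd : 0 < D k := lt_of_lt_of_le hc h3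
    have hM0 : (0:ℝ) < M := lt_of_lt_of_le one_pos hM
    have hlcpos : 0 < Real.log (Cs k) := by linarith
    have hldpos : 0 < Real.log (D k) := by linarith
    refine ⟨?_, ?_, ?_, ?_, ?_⟩
    · have hcalc : Real.log (B k) ≤ Real.log (M * A k) := Real.log_le_log hb (hBM k hk)
      rw [Real.log_mul (ne_of_gt hM0) (ne_of_gt ha)] at hcalc
      linarith
    · have e1 : Real.log (B k) = Real.log (Cs k) - 1/(α-2)*Real.log (Real.log (Cs k)) := by
        rw [hBdef k hk, Real.log_div (ne_of_gt hc)
          (ne_of_gt (Real.rpow_pos_of_pos hlcpos _)), Real.log_rpow hlcpos]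
      linarith
    · rw [hAdef k hk, Real.log_mul (ne_of_gt hd)
        (ne_of_gt (Real.rpow_pos_of_pos hldpos _)), Real.log_rpow hldpos]
    · obtain ⟨hl, hr⟩ := h322 k hk
      have hle := Real.log_le_log (by positivity) hl
      rw [Real.log_mul (ne_of_gt (inv_pos.2 hM0)) (ne_of_gt (Real.rpow_pos_of_pos hc _)),
        Real.log_inv, Real.log_rpow hc] at hle
      linarith
    · obtain ⟨hl, hr⟩ := h322 k hk
      have hle := Real.log_le_log hd hr
      rw [Real.log_mul (ne_of_gt hM0) (ne_of_gt (Real.rpow_pos_of_pos hc _)),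
        Real.log_rpow hc] at hle
      linarith
  have der : ∀ k, 1 ≤ k →
      ((δ+1)/2 * Real.log (Cs k) ≤ Real.log (D k) ∧
        Real.log (D k) ≤ 2*δ*Real.log (Cs k)) ∧
      ((δ+1)/2 * Real.log (A k) ≤ Real.log (A (k+1)) ∧
        Real.log (A (k+1)) ≤ K₂ * Real.log (A k)) := by
    intro k hk
    obtain ⟨⟨ha, h1, h2, h3, h4⟩, hla, hlb, hlc, hld⟩ := pk k hk
    obtain ⟨f1, f2, f3, f4, f5⟩ := logrel k hk
    have hlcpos : 0 < Real.log (Cs k) := by linarith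
    have hldpos : 0 < Real.log (D k) := by linarith
    have hlapos : 0 < Real.log (A k) := by linarith
    have hlcM : Real.log M ≤ (δ-1)/2 * Real.log (Cs k) := by
      have hmm : (δ-1)/2*Λ ≤ (δ-1)/2*Real.log (Cs k) :=
        mul_le_mul_of_nonneg_left hlc (by linarith)
      linarith
    have d1a : (δ+1)/2 * Real.log (Cs k) ≤ Real.log (D k) := by linarith
    have d1b : Real.log (D k) ≤ 2*δ*Real.log (Cs k) := by
      have hnn : 0 ≤ (δ-1)*Real.log (Cs k) :=
        mul_nonneg (by linarith) (le_of_lt hlcpos)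
      linarith
    have hloglc : Real.log (Real.log (Cs k)) ≤ (α-2)/2 * Real.log (Cs k) :=
      hΛ₀ _ (le_trans hΛ0 hlc)
    have e1 : 1/(α-2) * Real.log (Real.log (Cs k)) ≤ Real.log (Cs k)/2 := by
      have hmul := mul_le_mul_of_nonneg_left hloglc (le_of_lt (one_div_pos.2 hα2))
      have heq : 1/(α-2)*((α-2)/2*Real.log (Cs k)) = Real.log (Cs k)/2 := by
        field_simp
      linarith
    have hMa : Real.log M ≤ Real.log (A k) := le_trans hΛM hla
    have d2 : Real.log (Cs k) ≤ 4 * Real.log (A k) := by linarith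
    have hlab : Real.log (A k) ≤ Real.log (B k) := Real.log_le_log ha h1
    have hllcpos : 0 ≤ Real.log (Real.log (Cs k)) := by
      apply Real.log_nonneg; linarith
    have hlalc : Real.log (A k) ≤ Real.log (Cs k) := by
      have hnn : 0 ≤ 1/(α-2) * Real.log (Real.log (Cs k)) :=
        mul_nonneg (by positivity) hllcpos
      linarith
    have hlldpos : 0 ≤ Real.log (Real.log (D k)) := by
      apply Real.log_nonneg; linarith
    constructor
    · exact ⟨d1a, d1b⟩
    constructor
    · have q1 : 0 ≤ 1/(2-β) * Real.log (Real.log (D k)) :=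
        mul_nonneg (le_of_lt h1d2β) hlldpos
      have q2 : (δ+1)/2 * Real.log (A k) ≤ (δ+1)/2 * Real.log (Cs k) :=
        mul_le_mul_of_nonneg_left hlalc (by linarith)
      linarith
    · have p1 : Real.log (D k) ≤ 5*δ*Real.log (A k) := by
        have q1 : δ * Real.log (Cs k) ≤ δ * (4*Real.log (A k)) :=
          mul_le_mul_of_nonneg_left d2 (by linarith)
        have q2 : 0 ≤ (δ-1)*Real.log (A k) := mul_nonneg (by linarith) (le_of_lt hlapos)
        linarith
      have p2 : Real.log (Real.log (D k)) ≤ Real.log (D k) := by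
        have := Real.log_le_sub_one_of_pos hldpos; linarith
      have p3 : 1/(2-β)*Real.log (Real.log (D k)) ≤ 1/(2-β)*Real.log (D k) :=
        mul_le_mul_of_nonneg_left p2 (le_of_lt h1d2β)
      have p4 : (1+1/(2-β))*Real.log (D k) ≤ (1+1/(2-β))*(5*δ*Real.log (A k)) :=
        mul_le_mul_of_nonneg_left p1 (by linarith)
      have e2 : (1+1/(2-β))*(5*δ*Real.log (A k)) = K₂ * Real.log (A k) := by
        rw [hK₂def]; ring
      linarith
  have gbd : ∀ k, 1 ≤ k →
      (Γ₁ + Real.log (Real.log (Cs k)) ≤ Real.log (Real.log (D k)) ∧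
       Real.log (Real.log (D k)) ≤ Γ₂ + Real.log (Real.log (Cs k))) ∧
      (Γ₁ + Real.log (Real.log (A k)) ≤ Real.log (Real.log (A (k+1))) ∧
       Real.log (Real.log (A (k+1))) ≤ Γ₂ + Real.log (Real.log (A k))) := by
    intro k hk
    obtain ⟨⟨ha, h1, h2, h3, h4⟩, hla, hlb, hlc, hld⟩ := pk k hk
    obtain ⟨⟨d1a, d1b⟩, d3a, d3b⟩ := der k hk
    have hlcpos : 0 < Real.log (Cs k) := by linarith
    have hldpos : 0 < Real.log (D k) := by linarith
    have hlapos : 0 < Real.log (A k) := by linarith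
    have hla'pos : 0 < Real.log (A (k+1)) := by linarith [hAΛ (k+1) (by omega)]
    constructor
    · constructor
      · have q1 : Real.log ((δ+1)/2 * Real.log (Cs k)) ≤ Real.log (Real.log (D k)) :=
          Real.log_le_log (by positivity) d1a
        rw [Real.log_mul (by positivity) (ne_of_gt hlcpos)] at q1
        rw [hΓ₁def]; linarith
      · have q2 : Real.log (Real.log (D k)) ≤ Real.log (K₂ * Real.log (Cs k)) :=
          Real.log_le_log hldpos (le_trans d1b (by
            have hnn : 0 ≤ (K₂-2*δ)*Real.log (Cs k) :=
              mul_nonneg (by linarith) (by linarith)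
            linarith))
        rw [Real.log_mul (by positivity) (ne_of_gt hlcpos)] at q2
        rw [hΓ₂def]; linarith
    · constructor
      · have q1 : Real.log ((δ+1)/2 * Real.log (A k)) ≤ Real.log (Real.log (A (k+1))) :=
          Real.log_le_log (by positivity) d3a
        rw [Real.log_mul (by positivity) (ne_of_gt hlapos)] at q1
        rw [hΓ₁def]; linarith
      · have q2 : Real.log (Real.log (A (k+1))) ≤ Real.log (K₂ * Real.log (A k)) :=
          Real.log_le_log hla'pos d3b
        rw [Real.log_mul (by positivity) (ne_of_gt hlapos)] at q2
        rw [hΓ₂def]; linarith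
  set f : ℝ → ℝ := fun s => s / V s with hfdef
  have cyc : ∀ k, 1 ≤ k → IntervalIntegrable f volume (A k) (A (k+1)) ∧
      Γ₁/(2*π) ≤ (∫ s in (A k)..(A (k+1)), f s) ∧
      (∫ s in (A k)..(A (k+1)), f s) ≤ CU/(2*π) := by
    intro k hk
    obtain ⟨⟨ha, h1, h2, h3, h4⟩, hla, hlb, hlc, hld⟩ := pk k hk
    obtain ⟨f1, f2, f3, f4, f5⟩ := logrel k hk
    obtain ⟨⟨g1a, g1b⟩, -⟩ := gbd k hk
    have hb : 0 < B k := lt_of_lt_of_le ha h1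
    have hc : 0 < Cs k := lt_trans hb h2
    have hd : 0 < D k := lt_of_lt_of_le hc h3
    have hld2 : (2:ℝ) ≤ Real.log (D k) := by linarith
    have hc1 : (1:ℝ) < Cs k := by linarith [hmono k hk]
    -- piece 1
    have e1 : ∀ s ∈ Set.Ico (A k) (B k), f s = s/(2*π*s^2) := fun s hs => by
      simp only [hfdef]; rw [hV1 k hk s hs.1 hs.2]
    have i1 : IntervalIntegrable f volume (A k) (B k) :=
      integrable_congr_Ico h1 e1 (intgA ha h1)
    have v1 : (∫ s in (A k)..(B k), f s) = (Real.log (B k) - Real.log (A k))/(2*π) :=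
      (integral_congr_Ico h1 e1).trans (evalA ha h1)
    -- piece 2
    have e2 : ∀ s ∈ Set.Ico (B k) (Cs k), f s = s/(2*π*(s/B k)^α*(B k)^2) := fun s hs => by
      simp only [hfdef]; rw [hV2 k hk s hs.1 hs.2]
    have i2 : IntervalIntegrable f volume (B k) (Cs k) :=
      integrable_congr_Ico (le_of_lt h2) e2 (intgB hb hb (le_of_lt h2))
    have v2 : (∫ s in (B k)..(Cs k), f s)
        = (B k)^(α-2) * (((Cs k)^(2-α) - (B k)^(2-α))/(2-α)) / (2*π) :=
      (integral_congr_Ico (le_of_lt h2) e2).trans (evalB hb hb (le_of_lt h2) hα)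
    -- piece 3
    have e3 : ∀ s ∈ Set.Ico (Cs k) (D k), f s = s/(2*π*s^2*Real.log s) := fun s hs => by
      simp only [hfdef]; rw [hV3 k hk s hs.1 hs.2]
    have i3 : IntervalIntegrable f volume (Cs k) (D k) :=
      integrable_congr_Ico h3 e3 (intgC hc1 h3)
    have v3 : (∫ s in (Cs k)..(D k), f s)
        = (Real.log (Real.log (D k)) - Real.log (Real.log (Cs k)))/(2*π) :=
      (integral_congr_Ico h3 e3).trans (evalC hc1 h3)
    -- piece 4
    have e4 : ∀ s ∈ Set.Ico (D k) (A (k+1)),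
        f s = s/(2*π*(s/D k)^β*(D k)^2*Real.log (D k)) := fun s hs => by
      simp only [hfdef]; rw [hV4 k hk s hs.1 hs.2]
    have i4 : IntervalIntegrable f volume (D k) (A (k+1)) :=
      integrable_congr_Ico (le_of_lt h4) e4 (intgD hd (by linarith) hd (le_of_lt h4))
    have v4 : (∫ s in (D k)..(A (k+1)), f s)
        = (D k)^(β-2) * (((A (k+1))^(2-β) - (D k)^(2-β))/(2-β)) / (2*π*Real.log (D k)) :=
      (integral_congr_Ico (le_of_lt h4) e4).trans
        (evalD hd (by linarith) hd (le_of_lt h4) hβ2)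
    -- combine
    have itot : IntervalIntegrable f volume (A k) (A (k+1)) :=
      ((i1.trans i2).trans i3).trans i4
    have s1 : (∫ s in (A k)..(Cs k), f s)
        = (∫ s in (A k)..(B k), f s) + (∫ s in (B k)..(Cs k), f s) :=
      (intervalIntegral.integral_add_adjacent_intervals i1 i2).symm
    have s2 : (∫ s in (A k)..(D k), f s)
        = (∫ s in (A k)..(Cs k), f s) + (∫ s in (Cs k)..(D k), f s) :=
      (intervalIntegral.integral_add_adjacent_intervals (i1.trans i2) i3).symm
    have s3 : (∫ s in (A k)..(A (k+1)), f s)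
        = (∫ s in (A k)..(D k), f s) + (∫ s in (D k)..(A (k+1)), f s) :=
      (intervalIntegral.integral_add_adjacent_intervals ((i1.trans i2).trans i3) i4).symm
    obtain ⟨b2a, b2b⟩ := boundB hb (le_of_lt h2) hα
    have hbd := boundD hd hld2 hβ2
    rw [show D k * Real.log (D k) ^ ((1:ℝ)/(2-β)) = A (k+1) from (hAdef k hk).symm] at hbd
    obtain ⟨b4a, b4b⟩ := hbd
    have hlab : Real.log (A k) ≤ Real.log (B k) := Real.log_le_log ha h1
    have p1l : (0:ℝ) ≤ (Real.log (B k) - Real.log (A k))/(2*π) := div_nonneg (by linarith) (by positivity)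
    have p1u : (Real.log (B k) - Real.log (A k))/(2*π) ≤ Real.log M/(2*π) := by
      gcongr
      linarith
    have p3l : Γ₁/(2*π) ≤ (Real.log (Real.log (D k)) - Real.log (Real.log (Cs k)))/(2*π) := by
      gcongr
      linarith
    have p3u : (Real.log (Real.log (D k)) - Real.log (Real.log (Cs k)))/(2*π) ≤ Γ₂/(2*π) := by
      gcongr
      linarith
    have hCUsplit : CU/(2*π) = Real.log M/(2*π) + (α-2)⁻¹/(2*π) + Γ₂/(2*π) + (2-β)⁻¹/(2*π) := by
      rw [hCUdef]; ring
    refine ⟨itot, ?_, ?_⟩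
    · rw [s3, s2, s1, v1, v2, v3, v4]
      linarith
    · rw [s3, s2, s1, v1, v2, v3, v4]
      linarith
  have growth : ∀ k, 1 ≤ k → 2 * A k ≤ A (k+1) := by
    intro k hk
    obtain ⟨⟨ha, h1, h2, h3, h4⟩, hla, hlb, hlc, hld⟩ := pk k hk
    have hd : 0 < D k := by linarith
    have h2led : (2:ℝ)^((2:ℝ)-β) ≤ Real.log (D k) := by
      have hs : (2:ℝ)^((2:ℝ)-β) ≤ (2:ℝ)^((2:ℝ)) :=
        Real.rpow_le_rpow_of_exponent_le one_le_two (by linarith)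
      have h22 : (2:ℝ)^((2:ℝ)) = 4 := by
        rw [Real.rpow_two]; norm_num
      linarith
    have hstep : (2:ℝ) ≤ Real.log (D k) ^ ((1:ℝ)/(2-β)) := by
      have h0 : ((2:ℝ)^((2:ℝ)-β))^((1:ℝ)/(2-β)) ≤ Real.log (D k) ^ ((1:ℝ)/(2-β)) :=
        Real.rpow_le_rpow (by positivity) h2led (by positivity)
      have h1' : ((2:ℝ)^((2:ℝ)-β))^((1:ℝ)/(2-β)) = 2 := by
        rw [← Real.rpow_mul (by norm_num : (0:ℝ) ≤ 2), mul_one_div,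
          div_self (ne_of_gt h2β), Real.rpow_one]
      linarith
    have hgoal : 2 * D k ≤ Real.log (D k) ^ ((1:ℝ)/(2-β)) * D k :=
      mul_le_mul_of_nonneg_right hstep (le_of_lt hd)
    calc 2 * A k ≤ 2 * D k := by linarith
    _ ≤ Real.log (D k) ^ ((1:ℝ)/(2-β)) * D k := hgoal
    _ = A (k+1) := by rw [hAdef k hk]; ring
  have unbdd : ∀ n : ℕ, (n:ℝ) ≤ A (1+n) := by
    intro n
    induction n with
    | zero => simp; linarith
    | succ n ih =>
      have hg := growth (1+n) (by omega)
      have hA1n : A 1 ≤ A (1+n) := hmono _ (by omega)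
      have hidx : 1+n+1 = 1+(n+1) := by omega
      rw [hidx] at hg
      push_cast
      linarith
  have coverage : ∀ r, A 1 ≤ r → ∃ k, 1 ≤ k ∧ A k ≤ r ∧ r < A (k+1) := by
    intro r hr
    have hex : ∃ n : ℕ, r < A (n+1) := by
      obtain ⟨n, hn⟩ := exists_nat_gt r
      refine ⟨n, lt_of_lt_of_le hn ?_⟩
      have := unbdd n
      rwa [add_comm] at this
    have hk := Nat.find_spec hex
    rcases Nat.eq_zero_or_pos (Nat.find hex) with h0 | h0
    · rw [h0] at hk
      exact absurd hk (not_lt.2 hr)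
    · refine ⟨Nat.find hex, h0, ?_, hk⟩
      have hmin := Nat.find_min hex (Nat.sub_lt h0 one_pos)
      have hk1 : Nat.find hex - 1 + 1 = Nat.find hex := Nat.succ_pred_eq_of_pos h0
      rw [hk1] at hmin
      exact not_lt.1 hmin
  have Vpos : ∀ u, A 1 ≤ u → 0 < V u := by
    intro u hu
    obtain ⟨k, hk, h5, h6⟩ := coverage u hu
    obtain ⟨⟨ha, h1, h2, h3, h4⟩, hla, hlb, hlc, hld⟩ := pk k hk
    have hu0 : 0 < u := lt_of_lt_of_le ha h5
    rcases lt_or_ge u (B k) with hub | hub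
    · rw [hV1 k hk u h5 hub]; positivity
    rcases lt_or_ge u (Cs k) with huc | huc
    · rw [hV2 k hk u hub huc]
      have hb : 0 < B k := by linarith
      have hrp : 0 < (u/B k)^α := Real.rpow_pos_of_pos (by positivity) α
      positivity
    rcases lt_or_ge u (D k) with hud | hud
    · rw [hV3 k hk u huc hud]
      have hu1 : 1 < u := by linarith [hmono k hk]
      have hlu := Real.log_pos hu1
      positivity
    · rw [hV4 k hk u hud h6]
      have hd : 0 < D k := by linarith
      have hldp : 0 < Real.log (D k) := by linarith
      have hrp : 0 < (u/D k)^β := Real.rpow_pos_of_pos (by positivity) β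
      positivity
  have fnonneg : ∀ u, A 1 ≤ u → 0 ≤ f u := by
    intro u hu
    simp only [hfdef]
    exact div_nonneg (by linarith) (le_of_lt (Vpos u hu))
  have intLeft : ∀ k, 1 ≤ k → ∀ r, A k ≤ r → r ≤ A (k+1) →
      IntervalIntegrable f volume (A k) r := by
    intro k hk r h5 h6
    obtain ⟨⟨ha, h1, h2, h3, h4⟩, hla, hlb, hlc, hld⟩ := pk k hk
    have hb : 0 < B k := lt_of_lt_of_le ha h1
    have hc : 0 < Cs k := lt_trans hb h2
    have hd : 0 < D k := lt_of_lt_of_le hc h3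
    have hc1 : (1:ℝ) < Cs k := by linarith [hmono k hk]
    have hldp : (0:ℝ) < Real.log (D k) := by linarith
    have sub1 : ∀ x y, A k ≤ x → x ≤ y → y ≤ B k → IntervalIntegrable f volume x y := by
      intro x y hx hxy hy
      refine integrable_congr_Ico hxy (fun s hs => ?_) (intgA (by linarith) hxy)
      simp only [hfdef]; rw [hV1 k hk s (le_trans hx hs.1) (lt_of_lt_of_le hs.2 hy)]
    have sub2 : ∀ x y, B k ≤ x → x ≤ y → y ≤ Cs k → IntervalIntegrable f volume x y := by
      intro x y hx hxy hy
      have e : ∀ s ∈ Set.Ico x y, f s = s/(2*π*(s/B k)^α*(B k)^2) := fun s hs => by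
        simp only [hfdef]; rw [hV2 k hk s (le_trans hx hs.1) (lt_of_lt_of_le hs.2 hy)]
      exact integrable_congr_Ico hxy e (intgB hb (by linarith) hxy)
    have sub3 : ∀ x y, Cs k ≤ x → x ≤ y → y ≤ D k → IntervalIntegrable f volume x y := by
      intro x y hx hxy hy
      refine integrable_congr_Ico hxy (fun s hs => ?_) (intgC (by linarith) hxy)
      simp only [hfdef]; rw [hV3 k hk s (le_trans hx hs.1) (lt_of_lt_of_le hs.2 hy)]
    have sub4 : ∀ x y, D k ≤ x → x ≤ y → y ≤ A (k+1) → IntervalIntegrable f volume x y := by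
      intro x y hx hxy hy
      have e : ∀ s ∈ Set.Ico x y, f s = s/(2*π*(s/D k)^β*(D k)^2*Real.log (D k)) := fun s hs => by
        simp only [hfdef]; rw [hV4 k hk s (le_trans hx hs.1) (lt_of_lt_of_le hs.2 hy)]
      exact integrable_congr_Ico hxy e (intgD hd hldp (by linarith) hxy)
    rcases le_or_gt r (B k) with hr1 | hr1
    · exact sub1 (A k) r le_rfl h5 hr1
    rcases le_or_gt r (Cs k) with hr2 | hr2
    · exact (sub1 (A k) (B k) le_rfl h1 le_rfl).trans
        (sub2 (B k) r le_rfl (le_of_lt hr1) hr2)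
    rcases le_or_gt r (D k) with hr3 | hr3
    · exact ((sub1 (A k) (B k) le_rfl h1 le_rfl).trans
        (sub2 (B k) (Cs k) le_rfl (le_of_lt h2) le_rfl)).trans
        (sub3 (Cs k) r le_rfl (le_of_lt hr2) hr3)
    · exact (((sub1 (A k) (B k) le_rfl h1 le_rfl).trans
        (sub2 (B k) (Cs k) le_rfl (le_of_lt h2) le_rfl)).trans
        (sub3 (Cs k) (D k) le_rfl h3 le_rfl)).trans
        (sub4 (D k) r le_rfl (le_of_lt hr3) h6)
  obtain ⟨T, hTdef⟩ : ∃ T : ℝ, T = Real.log (Real.log (A 1)) := ⟨_, rfl⟩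
  obtain ⟨L1, hL1def⟩ : ∃ L1 : ℝ, L1 = Real.log (A 1) := ⟨_, rfl⟩
  have hL1pos : (4:ℝ) ≤ L1 := by rw [hL1def]; linarith [hA1Λ]
  have hTpos : (2:ℝ) ≤ T := by
    rw [hTdef]
    calc (2:ℝ) = Real.log (Real.exp 2) := (Real.log_exp 2).symm
    _ ≤ Real.log (Real.log (A 1)) :=
      Real.log_le_log (Real.exp_pos 2) (by linarith [hA1Λ])
  have main : ∀ k, 1 ≤ k →
      IntervalIntegrable f volume 1 (A k) ∧
      1 + ((k:ℝ)-1) * (Γ₁/(2*π)) ≤ h (A k) ∧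
      h (A k) ≤ 1 + L1/(2*π) + ((k:ℝ)-1) * (CU/(2*π)) ∧
      T + ((k:ℝ)-1)*Γ₁ ≤ Real.log (Real.log (A k)) ∧
      Real.log (Real.log (A k)) ≤ T + ((k:ℝ)-1)*Γ₂ := by
    intro k hk
    induction k, hk using Nat.le_induction with
    | base =>
      have h1A : (1:ℝ) ≤ A 1 := by linarith
      have e0 : ∀ s ∈ Set.Ico (1:ℝ) (A 1), f s = s/(2*π*s^2) := fun s hs => by
        simp only [hfdef]; rw [hV0 s (by linarith [hs.1]) hs.2]
      have i0 : IntervalIntegrable f volume 1 (A 1) :=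
        integrable_congr_Ico h1A e0 (intgA one_pos h1A)
      have v0 : (∫ s in (1:ℝ)..(A 1), f s) = (Real.log (A 1) - Real.log 1)/(2*π) :=
        (integral_congr_Ico h1A e0).trans (evalA one_pos h1A)
      rw [Real.log_one, sub_zero] at v0
      have hh1 := hhdef (A 1) h1A
      have hnn : 0 ≤ Real.log (A 1)/(2*π) :=
        div_nonneg (by linarith [hA1Λ]) (by positivity)
      refine ⟨i0, ?_, ?_, ?_, ?_⟩
      · rw [hh1, v0]; push_cast; linarith
      · rw [hh1, v0, hL1def]; push_cast; linarith
      · rw [hTdef]; push_cast; linarith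
      · rw [hTdef]; push_cast; linarith
    | succ n hn ih =>
      obtain ⟨i1A, lo, hi, llo, lhi⟩ := ih
      obtain ⟨ic, clo, chi⟩ := cyc n hn
      obtain ⟨-, g2a, g2b⟩ := gbd n hn
      have hAn1 : (1:ℝ) ≤ A n := by linarith [hmono n hn]
      have hAn1' : (1:ℝ) ≤ A (n+1) := by linarith [hmono (n+1) (by omega : 1 ≤ n+1)]
      have hsplit : (∫ s in (1:ℝ)..(A (n+1)), f s)
          = (∫ s in (1:ℝ)..(A n), f s) + (∫ s in (A n)..(A (n+1)), f s) :=
        (intervalIntegral.integral_add_adjacent_intervals i1A ic).symm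
      have hrec : h (A (n+1)) = h (A n) + (∫ s in (A n)..(A (n+1)), f s) := by
        rw [hhdef (A n) hAn1, hhdef (A (n+1)) hAn1', hsplit]; ring
      refine ⟨i1A.trans ic, ?_, ?_, ?_, ?_⟩
      · push_cast; push_cast at lo; linarith
      · push_cast; push_cast at hi; linarith
      · push_cast; push_cast at llo; linarith
      · push_cast; push_cast at lhi; linarith
  have hc0pos : 0 < min ((T+Γ₂)⁻¹) (Γ₁/(2*π)/(2*Γ₂)) := by
    apply lt_min
    · exact inv_pos.2 (by linarith)
    · exact div_pos (div_pos hΓ₁pos (by linarith)) (by linarith)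
  refine ⟨min ((T+Γ₂)⁻¹) (Γ₁/(2*π)/(2*Γ₂)),
    max (min ((T+Γ₂)⁻¹) (Γ₁/(2*π)/(2*Γ₂))) ((1 + L1/(2*π) + CU/(2*π))/T + CU/(2*π)/Γ₁),
    A 1, hc0pos, le_max_left _ _, ?_, ?_⟩
  · calc Real.exp 1 < Real.exp 2 := Real.exp_lt_exp.2 one_lt_two
    _ < A 1 := hA1e
  intro r hr
  obtain ⟨k, hk, hkr, hkr'⟩ := coverage r hr
  obtain ⟨i1A, lo, hi, llo, lhi⟩ := main k hk
  obtain ⟨-, -, hi', llo', lhi'⟩ := main (k+1) (by omega : 1 ≤ k+1)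
  have hAk1 : (1:ℝ) ≤ A k := by linarith [hmono k hk]
  have hr1 : (1:ℝ) ≤ r := le_trans hAk1 hkr
  have hil := intLeft k hk r hkr (le_of_lt hkr')
  have hhr := hhdef r hr1
  have hsplit : (∫ s in (1:ℝ)..r, f s)
      = (∫ s in (1:ℝ)..(A k), f s) + (∫ s in (A k)..r, f s) :=
    (intervalIntegral.integral_add_adjacent_intervals i1A hil).symm
  have nonneg1 : 0 ≤ ∫ s in (A k)..r, f s :=
    intervalIntegral.integral_nonneg hkr
      (fun u hu => fnonneg u (le_trans (hmono k hk) hu.1))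
  have hlow : h (A k) ≤ h r := by
    rw [hhr, hhdef (A k) hAk1, hsplit]; linarith
  have hir : IntervalIntegrable f volume r (A (k+1)) := hil.symm.trans (cyc k hk).1
  have hsplit2 : (∫ s in (1:ℝ)..(A (k+1)), f s)
      = (∫ s in (1:ℝ)..r, f s) + (∫ s in r..(A (k+1)), f s) :=
    (intervalIntegral.integral_add_adjacent_intervals (i1A.trans hil) hir).symm
  have nonneg2 : 0 ≤ ∫ s in r..(A (k+1)), f s :=
    intervalIntegral.integral_nonneg (le_of_lt hkr')
      (fun u hu => fnonneg u (le_trans hr hu.1))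
  have hAk1' : (1:ℝ) ≤ A (k+1) := le_trans hr1 (le_of_lt hkr')
  have hupp : h r ≤ h (A (k+1)) := by
    rw [hhr, hhdef (A (k+1)) hAk1', hsplit2]; linarith
  have hlak : 0 < Real.log (A k) := by linarith [hAΛ k hk]
  have hlr : Real.log (A k) ≤ Real.log r := Real.log_le_log (hApos k hk) hkr
  have hlr2 : Real.log r ≤ Real.log (A (k+1)) :=
    Real.log_le_log (by linarith [hApos k hk]) (le_of_lt hkr')
  have hllr1 : Real.log (Real.log (A k)) ≤ Real.log (Real.log r) := Real.log_le_log hlak hlr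
  have hllr2 : Real.log (Real.log r) ≤ Real.log (Real.log (A (k+1))) :=
    Real.log_le_log (by linarith) hlr2
  have hk1R : (1:ℝ) ≤ (k:ℝ) := by exact_mod_cast hk
  constructor
  · -- lower bound
    have hllub : Real.log (Real.log r) ≤ T + (k:ℝ)*Γ₂ := by
      push_cast at lhi'; linarith
    have hhlb : 1 + ((k:ℝ)-1) * (Γ₁/(2*π)) ≤ h r := le_trans lo hlow
    have hc0T : min ((T+Γ₂)⁻¹) (Γ₁/(2*π)/(2*Γ₂)) * (T + (k:ℝ)*Γ₂)
        ≤ 1 + ((k:ℝ)-1) * (Γ₁/(2*π)) := by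
      rcases Nat.lt_or_ge k 2 with h' | h'
      · have hk1 : k = 1 := by omega
        subst hk1
        have q1 : min ((T+Γ₂)⁻¹) (Γ₁/(2*π)/(2*Γ₂)) * (T+Γ₂) ≤ (T+Γ₂)⁻¹ * (T+Γ₂) :=
          mul_le_mul_of_nonneg_right (min_le_left _ _) (by linarith)
        rw [inv_mul_cancel₀ (by linarith : T+Γ₂ ≠ 0)] at q1
        push_cast
        linarith
      · have hk2 : (2:ℝ) ≤ (k:ℝ) := by exact_mod_cast h'
        have e0 : (T+Γ₂)⁻¹ * T ≤ 1 := by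
          rw [← div_eq_inv_mul, div_le_one (by linarith)]; linarith
        have e1 : min ((T+Γ₂)⁻¹) (Γ₁/(2*π)/(2*Γ₂)) * T ≤ 1 := by
          have := mul_le_mul_of_nonneg_right
            (min_le_left ((T+Γ₂)⁻¹) (Γ₁/(2*π)/(2*Γ₂))) (by linarith : (0:ℝ) ≤ T)
          linarith
        have e2 : min ((T+Γ₂)⁻¹) (Γ₁/(2*π)/(2*Γ₂)) * ((k:ℝ)*Γ₂)
            ≤ ((k:ℝ)-1) * (Γ₁/(2*π)) := by
          have q2 : min ((T+Γ₂)⁻¹) (Γ₁/(2*π)/(2*Γ₂)) * ((k:ℝ)*Γ₂)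
              ≤ (Γ₁/(2*π)/(2*Γ₂)) * ((k:ℝ)*Γ₂) :=
            mul_le_mul_of_nonneg_right (min_le_right _ _)
              (by positivity)
          have q3 : (Γ₁/(2*π)/(2*Γ₂)) * ((k:ℝ)*Γ₂) = (k:ℝ)*(Γ₁/(2*π))/2 := by
            field_simp
          have q4 : (k:ℝ)*(Γ₁/(2*π))/2 ≤ ((k:ℝ)-1) * (Γ₁/(2*π)) := by
            have hg : (0:ℝ) < Γ₁/(2*π) := by positivity
            linarith [mul_nonneg (by linarith : (0:ℝ) ≤ (k:ℝ)-2) (le_of_lt hg)]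
          linarith
        have expand : min ((T+Γ₂)⁻¹) (Γ₁/(2*π)/(2*Γ₂)) * (T + (k:ℝ)*Γ₂)
            = min ((T+Γ₂)⁻¹) (Γ₁/(2*π)/(2*Γ₂)) * T
              + min ((T+Γ₂)⁻¹) (Γ₁/(2*π)/(2*Γ₂)) * ((k:ℝ)*Γ₂) := by ring
        linarith
    calc min ((T+Γ₂)⁻¹) (Γ₁/(2*π)/(2*Γ₂)) * Real.log (Real.log r)
        ≤ min ((T+Γ₂)⁻¹) (Γ₁/(2*π)/(2*Γ₂)) * (T + (k:ℝ)*Γ₂) :=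
          mul_le_mul_of_nonneg_left hllub (le_of_lt hc0pos)
    _ ≤ 1 + ((k:ℝ)-1) * (Γ₁/(2*π)) := hc0T
    _ ≤ h r := hhlb
  · -- upper bound
    have hCU' : (0:ℝ) ≤ CU/(2*π) := by positivity
    have hC0nn : (0:ℝ) ≤ (1 + L1/(2*π) + CU/(2*π))/T + CU/(2*π)/Γ₁ := by
      apply add_nonneg
      · apply div_nonneg _ (by linarith)
        have : (0:ℝ) ≤ L1/(2*π) := by positivity
        linarith
      · exact div_nonneg hCU' (le_of_lt hΓ₁pos)
    have h1 : h r ≤ 1 + L1/(2*π) + (k:ℝ)*(CU/(2*π)) := by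
      push_cast at hi'; linarith
    have h2 : T + ((k:ℝ)-1)*Γ₁ ≤ Real.log (Real.log r) := le_trans llo hllr1
    have hx : (0:ℝ) ≤ (k:ℝ)-1 := by linarith
    have q1 : (1 + L1/(2*π) + CU/(2*π))/T ≤ (1 + L1/(2*π) + CU/(2*π))/T + CU/(2*π)/Γ₁ :=
      le_add_of_nonneg_right (div_nonneg hCU' (le_of_lt hΓ₁pos))
    have q2 : CU/(2*π)/Γ₁ ≤ (1 + L1/(2*π) + CU/(2*π))/T + CU/(2*π)/Γ₁ := by
      apply le_add_of_nonneg_left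
      apply div_nonneg _ (by linarith)
      have : (0:ℝ) ≤ L1/(2*π) := by positivity
      linarith
    have e1 : (1 + L1/(2*π) + CU/(2*π))/T * T = 1 + L1/(2*π) + CU/(2*π) :=
      div_mul_cancel₀ _ (ne_of_gt (by linarith : (0:ℝ) < T))
    have e2 : CU/(2*π)/Γ₁ * (((k:ℝ)-1)*Γ₁) = CU/(2*π)*((k:ℝ)-1) := by
      have hg : Γ₁ ≠ 0 := ne_of_gt hΓ₁pos
      have hp : (2*π) ≠ 0 := by positivity
      field_simp
    have q3 : 1 + L1/(2*π) + CU/(2*π)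
        ≤ ((1 + L1/(2*π) + CU/(2*π))/T + CU/(2*π)/Γ₁) * T := by
      have := mul_le_mul_of_nonneg_right q1 (by linarith : (0:ℝ) ≤ T)
      linarith
    have q4 : CU/(2*π)*((k:ℝ)-1)
        ≤ ((1 + L1/(2*π) + CU/(2*π))/T + CU/(2*π)/Γ₁) * (((k:ℝ)-1)*Γ₁) := by
      have := mul_le_mul_of_nonneg_right q2
        (mul_nonneg hx (le_of_lt hΓ₁pos))
      linarith
    have h3 : 1 + L1/(2*π) + (k:ℝ)*(CU/(2*π))
        ≤ ((1 + L1/(2*π) + CU/(2*π))/T + CU/(2*π)/Γ₁) * (T + ((k:ℝ)-1)*Γ₁) := by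
      have expand : ((1 + L1/(2*π) + CU/(2*π))/T + CU/(2*π)/Γ₁) * (T + ((k:ℝ)-1)*Γ₁)
          = ((1 + L1/(2*π) + CU/(2*π))/T + CU/(2*π)/Γ₁) * T
            + ((1 + L1/(2*π) + CU/(2*π))/T + CU/(2*π)/Γ₁) * (((k:ℝ)-1)*Γ₁) := by ring
      have ekc : (k:ℝ)*(CU/(2*π)) = CU/(2*π) + CU/(2*π)*((k:ℝ)-1) := by ring
      linarith
    calc h r ≤ 1 + L1/(2*π) + (k:ℝ)*(CU/(2*π)) := h1
    _ ≤ ((1 + L1/(2*π) + CU/(2*π))/T + CU/(2*π)/Γ₁) * (T + ((k:ℝ)-1)*Γ₁) := h3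
    _ ≤ ((1 + L1/(2*π) + CU/(2*π))/T + CU/(2*π)/Γ₁) * Real.log (Real.log r) :=
      mul_le_mul_of_nonneg_left h2 hC0nn
    _ ≤ max (min ((T+Γ₂)⁻¹) (Γ₁/(2*π)/(2*Γ₂)))
          ((1 + L1/(2*π) + CU/(2*π))/T + CU/(2*π)/Γ₁) * Real.log (Real.log r) := by
      apply mul_le_mul_of_nonneg_right (le_max_right _ _)
      linarith [mul_nonneg hx (le_of_lt hΓ₁pos), h2]
end
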